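/- arXiv:2507.20298 — 4 statements merged into one kernel-verified Lean document; each statement's English description precedes it below -/
import Mathlib

section
/- Let A(q) = ∏_j f_j^{n_j} =: Σ_{n≥0} a_n q^n be any eta quotient such that n_1 is odd and, for every odd j > 1, the exponent n_j is even. Let S_□ := {k^2 : k ≥ 1} ∪ {2k^2 : k ≥ 1}. (i) For any nonnegative integer N such that a_N is even, or such that N is even and a_N is odd, the cardinality of {(m, s) ∈ ℕ × ℕ : a_m is odd, s ∈ S_□, m + s = N} is even. (ii) For any odd N with a_N odd, the cardinality of {(m, s) ∈ ℕ × ℕ : a_m is odd, s ∈ S_□, m + s = N} is odd. -/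
open PowerSeries Finset

/-- `etaF j` is the formal power series `f_j = ∏_{n=1}^∞ (1 - q^{j n})` in `ℤ⟦q⟧`,
defined through its truncations: for `j ≥ 1` the coefficient of `q^N` in the infinite
product only depends on the (finitely many) factors with `j * n ≤ N`. -/
noncomputable def etaF (j : ℕ) : PowerSeries ℤ :=
  PowerSeries.mk fun N =>
    PowerSeries.coeff N (∏ n ∈ Finset.Icc 1 N, (1 - (PowerSeries.X : PowerSeries ℤ) ^ (j * n)))

lemma constantCoeff_etaF (j : ℕ) : PowerSeries.constantCoeff (etaF j) = 1 := by
  rw [← PowerSeries.coeff_zero_eq_constantCoeff_apply]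
  simp [etaF]

lemma isUnit_etaF (j : ℕ) : IsUnit (etaF j) := by
  rw [PowerSeries.isUnit_iff_constantCoeff, constantCoeff_etaF]
  exact isUnit_one

/-- `etaF j` as a unit of `ℤ⟦q⟧`, so that arbitrary integer powers make sense. -/
noncomputable def etaU (j : ℕ) : (PowerSeries ℤ)ˣ := (isUnit_etaF j).unit

@[simp] lemma etaU_val (j : ℕ) : (etaU j : PowerSeries ℤ) = etaF j := (isUnit_etaF j).unit_spec

/-- The set of positive squares and twice positive squares. -/
def SSq : Set ℕ := {s | ∃ k : ℕ, 1 ≤ k ∧ s = k ^ 2} ∪ {s | ∃ k : ℕ, 1 ≤ k ∧ s = 2 * k ^ 2}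

-- number theory part: parity of sigma
lemma isSquare_iff_even_factorization {m : ℕ} (hm : m ≠ 0) :
    IsSquare m ↔ ∀ p, Even (m.factorization p) := by
  constructor
  · rintro ⟨r, rfl⟩ p
    have hr : r ≠ 0 := by rintro rfl; simp at hm
    rw [Nat.factorization_mul hr hr]
    exact ⟨r.factorization p, by simp⟩
  · intro h
    refine ⟨m.factorization.prod fun p e => p ^ (e / 2), ?_⟩
    rw [Finsupp.prod, ← Finset.prod_mul_distrib]
    have : ∀ p ∈ m.factorization.support, p ^ (m.factorization p / 2) * p ^ (m.factorization p / 2) = p ^ (m.factorization p) := by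
      intro p hp
      rw [← pow_add]
      congr 1
      obtain ⟨k, hk⟩ := h p
      omega
    rw [Finset.prod_congr rfl this]
    exact (Nat.factorization_prod_pow_eq_self hm).symm

lemma odd_card_divisors_iff {m : ℕ} (hm : m ≠ 0) :
    Odd (#m.divisors) ↔ IsSquare m := by
  rw [Nat.card_divisors hm, isSquare_iff_even_factorization hm]
  rw [Nat.not_even_iff_odd.symm, even_iff_two_dvd]
  rw [Nat.Prime.prime Nat.prime_two |>.dvd_finset_prod_iff]
  constructor
  · intro h p
    by_cases hp : p ∈ m.primeFactors
    · have hd := fun hd => h ⟨p, hp, hd⟩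
      have hd2 : ¬ (2 ∣ m.factorization p + 1) := hd
      rw [Nat.even_iff]
      omega
    · have : m.factorization p = 0 := by
        rw [← Finsupp.notMem_support_iff]
        exact hp
      simp [this]
  · rintro h ⟨p, hp, hd⟩
    obtain ⟨k, hk⟩ := h p
    omega

/-- The set of positive squares and twice positive squares. -/


lemma mem_SSq_iff {s : ℕ} (hs : s ≠ 0) : s ∈ SSq ↔ IsSquare (ordCompl[2] s) := by
  constructor
  · rintro (⟨k, hk, rfl⟩ | ⟨k, hk, rfl⟩)
    · rw [isSquare_iff_even_factorization (Nat.ordCompl_pos 2 hs).ne']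
      intro p
      rw [Nat.factorization_ordCompl]
      rcases eq_or_ne p 2 with rfl | hp
      · simp
      · rw [Finsupp.erase_ne hp, Nat.factorization_pow]
        exact ⟨k.factorization p, by simp [two_mul]⟩
    · rw [isSquare_iff_even_factorization (Nat.ordCompl_pos 2 hs).ne']
      intro p
      rw [Nat.factorization_ordCompl]
      rcases eq_or_ne p 2 with rfl | hp
      · simp
      · rw [Finsupp.erase_ne hp, Nat.factorization_mul two_ne_zero (by positivity),
          Nat.factorization_pow]
        have h2 : (Nat.factorization 2) p = 0 := by
          rw [Nat.Prime.factorization Nat.prime_two]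
          simp [Finsupp.single_apply, Ne.symm hp]
        rw [Finsupp.add_apply, h2, zero_add, Finsupp.smul_apply]
        exact ⟨k.factorization p, by simp [two_mul]⟩
  · rintro ⟨k, hk⟩
    set a := s.factorization 2 with ha
    have hself : 2 ^ a * ordCompl[2] s = s := Nat.ordProj_mul_ordCompl_eq_self s 2
    have hkpos : 1 ≤ k := by
      rcases Nat.eq_zero_or_pos k with rfl | h
      · rw [mul_zero] at hk; exact absurd hk (Nat.ordCompl_pos 2 hs).ne' 
      · exact h
    rcases Nat.even_or_odd a with ⟨b, hb⟩ | ⟨b, hb⟩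
    · left
      exact ⟨2 ^ b * k, Nat.one_le_iff_ne_zero.mpr (by positivity), by rw [← hself, hk, hb]; ring⟩
    · right
      exact ⟨2 ^ b * k, Nat.one_le_iff_ne_zero.mpr (by positivity), by rw [← hself, hk, hb]; ring⟩

lemma filter_odd_divisors (s : ℕ) :
    s.divisors.filter (fun d => Odd d) = (ordCompl[2] s).divisors := by
  rcases eq_or_ne s 0 with rfl | hs
  · simp
  ext d
  simp only [Finset.mem_filter, Nat.mem_divisors]
  constructor
  · rintro ⟨⟨hd, _⟩, hodd⟩
    refine ⟨?_, (Nat.ordCompl_pos 2 hs).ne'⟩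
    have hcop : Nat.Coprime d (2 ^ s.factorization 2) := by
      apply Nat.Coprime.pow_right
      rw [Nat.coprime_comm]
      rw [Nat.Prime.coprime_iff_not_dvd Nat.prime_two, ← even_iff_two_dvd]
      exact Nat.not_even_iff_odd.mpr hodd
    rw [← Nat.ordProj_mul_ordCompl_eq_self s 2] at hd
    exact (Nat.Coprime.dvd_mul_left hcop).mp hd
  · rintro ⟨hd, _⟩
    have hdvd : d ∣ s := hd.trans (Nat.ordCompl_dvd s 2)
    refine ⟨⟨hdvd, hs⟩, ?_⟩
    rw [← Nat.not_even_iff_odd, even_iff_two_dvd]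
    intro h2
    exact Nat.not_dvd_ordCompl Nat.prime_two hs (h2.trans hd)

lemma zero_not_mem_SSq : (0 : ℕ) ∉ SSq := by
  rintro (⟨k, hk, h⟩ | ⟨k, hk, h⟩) <;> rw [pow_two] at h <;> nlinarith

lemma natCast_zmod_two (d : ℕ) : (d : ZMod 2) = if Odd d then 1 else 0 := by
  rw [← ZMod.natCast_mod]
  rcases Nat.even_or_odd d with he | ho
  · rw [Nat.even_iff.mp he]; simp [Nat.not_odd_iff_even.mpr he]
  · rw [Nat.odd_iff.mp ho]; simp [ho]

open scoped Classical in
lemma sigma_mod_two (s : ℕ) :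
    ((∑ d ∈ s.divisors, d : ℕ) : ZMod 2) = if s ∈ SSq then 1 else 0 := by
  rcases eq_or_ne s 0 with rfl | hs
  · simp [zero_not_mem_SSq]
  have h1 : ((∑ d ∈ s.divisors, d : ℕ) : ZMod 2)
      = ∑ d ∈ s.divisors, (if Odd d then (1 : ZMod 2) else 0) := by
    push_cast
    exact Finset.sum_congr rfl fun d _ => natCast_zmod_two d
  rw [h1, Finset.sum_boole, filter_odd_divisors]
  rw [natCast_zmod_two]
  by_cases hmem : s ∈ SSq
  · rw [if_pos hmem, if_pos]
    exact (odd_card_divisors_iff (Nat.ordCompl_pos 2 hs).ne').mpr ((mem_SSq_iff hs).mp hmem)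
  · rw [if_neg hmem, if_neg]
    intro hodd
    exact hmem ((mem_SSq_iff hs).mpr ((odd_card_divisors_iff (Nat.ordCompl_pos 2 hs).ne').mp hodd))

section PS

variable {R : Type*} [CommRing R]

lemma coeff_X_mul_derivativeFun (f : R⟦X⟧) (n : ℕ) :
    coeff n (X * derivativeFun f) = (n : R) * coeff n f := by
  cases n with
  | zero => simp
  | succ n =>
      rw [coeff_succ_X_mul, show derivativeFun f = d⁄dX R f from rfl, coeff_derivativeFun]
      push_cast; ring

/-- logarithmic-derivative of products -/
lemma X_mul_derivativeFun_prod {ι : Type*} (s : Finset ι) (g L : ι → R⟦X⟧)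
    (h : ∀ i ∈ s, X * derivativeFun (g i) = g i * L i) :
    X * derivativeFun (∏ i ∈ s, g i) = (∏ i ∈ s, g i) * (∑ i ∈ s, L i) := by
  induction s using Finset.cons_induction with
  | empty => simp [derivativeFun_one]
  | cons a s ha ih =>
      rw [Finset.prod_cons, Finset.sum_cons, derivativeFun_mul]
      rw [mul_add, smul_eq_mul, smul_eq_mul]
      rw [show X * (g a * derivativeFun (∏ i ∈ s, g i)) = g a * (X * derivativeFun (∏ i ∈ s, g i)) by ring,
        show X * ((∏ i ∈ s, g i) * derivativeFun (g a)) = (∏ i ∈ s, g i) * (X * derivativeFun (g a)) by ring]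
      rw [ih (fun i hi => h i (Finset.mem_cons.mpr (Or.inr hi))), h a (Finset.mem_cons_self a s)]
      ring

/-- `ℓ u = u⁻¹ * (X * D u)` -/
noncomputable def elog (u : (R⟦X⟧)ˣ) : R⟦X⟧ := (↑u⁻¹ : R⟦X⟧) * (X * derivativeFun (u : R⟦X⟧))

lemma X_mul_derivativeFun_eq (u : (R⟦X⟧)ˣ) :
    X * derivativeFun (u : R⟦X⟧) = (u : R⟦X⟧) * elog u := by
  rw [elog, ← mul_assoc, Units.mul_inv, one_mul]

lemma elog_eq_of (u : (R⟦X⟧)ˣ) (L : R⟦X⟧)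
    (h : X * derivativeFun (u : R⟦X⟧) = (u : R⟦X⟧) * L) : elog u = L := by
  rw [elog, h, ← mul_assoc, Units.inv_mul, one_mul]

lemma elog_one : elog (1 : (R⟦X⟧)ˣ) = 0 := by
  apply elog_eq_of; simp [derivativeFun_one]

lemma elog_mul (u v : (R⟦X⟧)ˣ) : elog (u * v) = elog u + elog v := by
  apply elog_eq_of
  rw [Units.val_mul, derivativeFun_mul, smul_eq_mul, smul_eq_mul, mul_add]
  rw [show X * ((u : R⟦X⟧) * derivativeFun (v : R⟦X⟧)) = (u : R⟦X⟧) * (X * derivativeFun (v : R⟦X⟧)) by ring,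
    show X * ((v : R⟦X⟧) * derivativeFun (u : R⟦X⟧)) = (v : R⟦X⟧) * (X * derivativeFun (u : R⟦X⟧)) by ring,
    X_mul_derivativeFun_eq, X_mul_derivativeFun_eq]
  ring

lemma elog_pow (u : (R⟦X⟧)ˣ) (n : ℕ) : elog (u ^ n) = n • elog u := by
  induction n with
  | zero => simpa using elog_one
  | succ n ih => rw [pow_succ, elog_mul, ih, succ_nsmul]

lemma elog_inv (u : (R⟦X⟧)ˣ) : elog u⁻¹ = -elog u := by
  have h := elog_mul u u⁻¹
  rw [mul_inv_cancel] at h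
  rw [elog_one] at h
  linear_combination -h

lemma elog_zpow (u : (R⟦X⟧)ˣ) (e : ℤ) : elog (u ^ e) = e • elog u := by
  cases e with
  | ofNat n => rw [Int.ofNat_eq_coe, zpow_natCast, elog_pow, natCast_zsmul]
  | negSucc n =>
      rw [zpow_negSucc, elog_inv, elog_pow]
      rw [Int.negSucc_eq]
      simp only [zsmul_eq_mul, nsmul_eq_mul]
      push_cast
      ring

lemma elog_prod {ι : Type*} (s : Finset ι) (v : ι → (R⟦X⟧)ˣ) :
    elog (∏ i ∈ s, v i) = ∑ i ∈ s, elog (v i) := by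
  induction s using Finset.cons_induction with
  | empty => simpa using elog_one
  | cons a s ha ih => rw [Finset.prod_cons, Finset.sum_cons, elog_mul, ih]

end PS

section Z2

lemma ps_add_self (f : PowerSeries (ZMod 2)) : f + f = 0 := by
  ext n
  rw [map_add, map_zero, CharTwo.add_self_eq_zero]

lemma ps_neg_eq (f : PowerSeries (ZMod 2)) : -f = f := by
  rw [neg_eq_iff_add_eq_zero, ps_add_self]

lemma zsmul_even_ps {e : ℤ} (he : Even e) (f : PowerSeries (ZMod 2)) : e • f = 0 := by
  obtain ⟨k, rfl⟩ := he
  rw [add_zsmul, ps_add_self]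

lemma zsmul_odd_ps {e : ℤ} (he : Odd e) (f : PowerSeries (ZMod 2)) : e • f = f := by
  obtain ⟨k, rfl⟩ := he
  rw [add_zsmul, one_zsmul, two_mul, add_zsmul, ps_add_self, zero_add]

/-- `∑_{m ≥ 0, d ∣ m} X^m`, the inverse of `1 - X^d`. -/
noncomputable def Gd (d : ℕ) : PowerSeries (ZMod 2) :=
  PowerSeries.mk fun n => if d ∣ n then 1 else 0

lemma one_sub_X_pow_mul_Gd {d : ℕ} (hd : 1 ≤ d) :
    ((1 - X ^ d) : PowerSeries (ZMod 2)) * Gd d = 1 := by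
  ext n
  rw [sub_mul, one_mul, map_sub, show (X:PowerSeries (ZMod 2))^d * Gd d = Gd d * X^d by ring,
    coeff_mul_X_pow', coeff_one]
  rcases eq_or_ne n 0 with rfl | hn
  · rw [if_neg (by omega), sub_zero, if_pos rfl]
    simp [Gd]
  · rw [if_neg hn]
    by_cases hdn : d ≤ n
    · rw [if_pos hdn]
      simp only [Gd, coeff_mk]
      have : d ∣ n ↔ d ∣ n - d := by
        constructor
        · intro h; exact (Nat.dvd_sub h dvd_rfl)
        · intro h
          have := Nat.dvd_add h (dvd_refl d)
          rwa [Nat.sub_add_cancel hdn] at this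
      by_cases h : d ∣ n
      · rw [if_pos h, if_pos (this.mp h), sub_self]
      · rw [if_neg h, if_neg (fun hh => h (this.mpr hh)), sub_self]
    · rw [if_neg hdn, sub_zero]
      simp only [Gd, coeff_mk]
      rw [if_neg]
      intro h
      exact hdn (Nat.le_of_dvd (Nat.pos_of_ne_zero hn) h)

lemma factor_logderiv {d : ℕ} (hd : 1 ≤ d) :
    X * derivativeFun ((1 - X ^ d) : PowerSeries (ZMod 2))
      = ((1 - X ^ d) : PowerSeries (ZMod 2)) * ((d : ZMod 2) • (X ^ d * Gd d)) := by
  have hrhs : ((1 - X ^ d) : PowerSeries (ZMod 2)) * ((d : ZMod 2) • (X ^ d * Gd d))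
      = (d : ZMod 2) • (X ^ d : PowerSeries (ZMod 2)) := by
    rw [mul_smul_comm]
    congr 1
    rw [show ((1 - X ^ d) : PowerSeries (ZMod 2)) * (X ^ d * Gd d) = X^d * ((1 - X^d) * Gd d) by ring,
      one_sub_X_pow_mul_Gd hd, mul_one]
  rw [hrhs]
  ext n
  rw [coeff_X_mul_derivativeFun, map_smul, coeff_X_pow, map_sub, coeff_one, coeff_X_pow]
  by_cases h : n = d
  · subst h
    rw [if_pos rfl, if_neg (by omega), smul_eq_mul, mul_one]
    rw [zero_sub, mul_neg_one, CharTwo.neg_eq]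
  · rw [if_neg h, smul_zero]
    rcases eq_or_ne n 0 with rfl | hn
    · simp
    · rw [if_neg hn, sub_zero, mul_zero]

end Z2

section Z2b

/-- truncated product -/
noncomputable def pser (j M : ℕ) : PowerSeries (ZMod 2) :=
  ∏ n ∈ Finset.Icc 1 M, (1 - (X : PowerSeries (ZMod 2)) ^ (j * n))

noncomputable def fbar (j : ℕ) : PowerSeries (ZMod 2) :=
  PowerSeries.map (Int.castRingHom (ZMod 2)) (etaF j)

lemma coeff_fbar (j N : ℕ) : coeff N (fbar j) = coeff N (pser j N) := by
  rw [fbar, coeff_map, etaF, coeff_mk, pser]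
  rw [← coeff_map, map_prod]
  congr 1
  apply Finset.prod_congr rfl
  intro n _
  rw [map_sub, map_one, map_pow, PowerSeries.map_X]

lemma coeff_pser_stable {j : ℕ} (hj : 1 ≤ j) {m M M' : ℕ} (hm : m ≤ M) (hMM : M ≤ M') :
    coeff m (pser j M') = coeff m (pser j M) := by
  induction M' with
  | zero => rw [Nat.le_zero.mp hMM]
  | succ K ih =>
      rcases Nat.lt_or_ge M (K + 1) with h | h
      · have hMK : M ≤ K := by omega
        rw [← ih hMK]
        rw [pser, Finset.prod_Icc_succ_top (by omega), mul_sub, mul_one, map_sub, ← pser]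
        have : coeff m (pser j K * (X:PowerSeries (ZMod 2)) ^ (j * (K+1))) = 0 := by
          rw [coeff_mul_X_pow']
          rw [if_neg]
          have : K + 1 ≤ j * (K + 1) := Nat.le_mul_of_pos_left _ (by omega)
          omega
        rw [this, sub_zero]
      · have : M = K + 1 := by omega
        rw [this]

lemma coeff_fbar_eq {j m M : ℕ} (hj : 1 ≤ j) (hm : m ≤ M) :
    coeff m (fbar j) = coeff m (pser j M) := by
  rw [coeff_fbar, coeff_pser_stable hj le_rfl hm]

/-- truncated sigma generating function -/
noncomputable def SN (N : ℕ) : PowerSeries (ZMod 2) :=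
  ∑ d ∈ Finset.Icc 1 N, (d : ZMod 2) • ((X : PowerSeries (ZMod 2)) ^ d * Gd d)

lemma pser_logderiv (M : ℕ) :
    X * derivativeFun (pser 1 M) = pser 1 M * SN M := by
  rw [pser, SN]
  have := X_mul_derivativeFun_prod (Finset.Icc 1 M)
    (fun n => (1 - (X : PowerSeries (ZMod 2)) ^ (1 * n)))
    (fun d => (d : ZMod 2) • ((X : PowerSeries (ZMod 2)) ^ d * Gd d)) ?_
  · exact this
  · intro i hi
    simp only [one_mul]
    exact factor_logderiv (Finset.mem_Icc.mp hi).1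

lemma coeff_SN {s N : ℕ} (hs : s ≤ N) :
    coeff s (SN N) = ((∑ d ∈ s.divisors, d : ℕ) : ZMod 2) := by
  rw [SN, map_sum]
  have hterm : ∀ d ∈ Finset.Icc 1 N,
      coeff s ((d : ZMod 2) • ((X : PowerSeries (ZMod 2)) ^ d * Gd d))
        = if d ∈ s.divisors then (d : ZMod 2) else 0 := by
    intro d hd
    obtain ⟨hd1, hdN⟩ := Finset.mem_Icc.mp hd
    rw [map_smul, smul_eq_mul]
    rw [show (X : PowerSeries (ZMod 2)) ^ d * Gd d = Gd d * X ^ d by ring, coeff_mul_X_pow']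
    by_cases hds : d ≤ s
    · rw [if_pos hds]
      simp only [Gd, coeff_mk]
      have hiff : d ∣ s - d ↔ d ∣ s := by
        constructor
        · intro h
          have := Nat.dvd_add h (dvd_refl d)
          rwa [Nat.sub_add_cancel hds] at this
        · intro h; exact Nat.dvd_sub h dvd_rfl
      by_cases h : d ∣ s
      · rw [if_pos (hiff.mpr h), if_pos, mul_one]
        rw [Nat.mem_divisors]
        exact ⟨h, by omega⟩
      · rw [if_neg (fun hh => h (hiff.mp hh)), if_neg, mul_zero]
        rw [Nat.mem_divisors]
        tauto
    · rw [if_neg hds, if_neg, mul_zero]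
      rw [Nat.mem_divisors]
      rintro ⟨h, hs0⟩
      exact hds (Nat.le_of_dvd (Nat.pos_of_ne_zero hs0) h)
  rw [Finset.sum_congr rfl hterm]
  rw [← Finset.sum_filter]
  have hset : (Finset.Icc 1 N).filter (fun d => d ∈ s.divisors) = s.divisors := by
    ext d
    rw [Finset.mem_filter, Finset.mem_Icc, Nat.mem_divisors]
    constructor
    · tauto
    · rintro ⟨h, hs0⟩
      have hdpos : 0 < d := Nat.pos_of_dvd_of_pos h (Nat.pos_of_ne_zero hs0)
      have : d ≤ s := Nat.le_of_dvd (Nat.pos_of_ne_zero hs0) h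
      exact ⟨⟨hdpos, by omega⟩, h, hs0⟩
  rw [hset]
  push_cast
  rfl

end Z2b

section Z2c


open scoped Classical in
noncomputable def Sg : PowerSeries (ZMod 2) :=
  PowerSeries.mk fun n => if n ∈ SSq then 1 else 0

open scoped Classical in
lemma coeff_Sg (n : ℕ) : coeff n Sg = if n ∈ SSq then 1 else 0 := by
  rw [Sg, coeff_mk]

lemma main_identity : X * derivativeFun (fbar 1) = fbar 1 * Sg := by
  classical
  ext N
  rw [coeff_X_mul_derivativeFun, coeff_fbar]
  have h1 : (N : ZMod 2) * coeff N (pser 1 N)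
      = coeff N (X * derivativeFun (pser 1 N)) := by
    rw [coeff_X_mul_derivativeFun]
  rw [h1, pser_logderiv, coeff_mul, coeff_mul]
  apply Finset.sum_congr rfl
  intro p hp
  have hmem := Finset.HasAntidiagonal.mem_antidiagonal.mp hp
  have hp1 : p.1 ≤ N := by omega
  have hp2 : p.2 ≤ N := by omega
  rw [coeff_SN hp2, sigma_mod_two, ← coeff_Sg, coeff_fbar_eq le_rfl hp1]

lemma coeff_pser_eq_zero {j m M : ℕ} (hjm : ¬ j ∣ m) :
    coeff m (pser j M) = 0 := by
  revert m
  rw [pser]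
  have := Finset.prod_induction (s := Finset.Icc 1 M)
    (fun n => (1 - (X : PowerSeries (ZMod 2)) ^ (j * n)))
    (fun g => ∀ m, ¬ j ∣ m → coeff m g = 0) ?_ ?_ ?_
  · intro m hm; exact this m hm
  · intro a b ha hb m hm
    rw [coeff_mul]
    apply Finset.sum_eq_zero
    intro p hp
    have hmem := Finset.HasAntidiagonal.mem_antidiagonal.mp hp
    by_cases h : j ∣ p.1
    · have : ¬ j ∣ p.2 := fun hh => hm (hmem ▸ Nat.dvd_add h hh)
      rw [hb p.2 this, mul_zero]
    · rw [ha p.1 h, zero_mul]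
  · intro m hm
    rw [coeff_one, if_neg, ]
    intro h
    exact hm (h ▸ dvd_zero j)
  · intro n _ m hm
    rw [map_sub, coeff_one, coeff_X_pow, if_neg, if_neg, sub_zero]
    · rintro rfl
      exact hm (Dvd.intro n rfl)
    · rintro rfl
      exact hm (dvd_zero j)

lemma derivativeFun_fbar_even {j : ℕ} (hj : Even j) : derivativeFun (fbar j) = 0 := by
  ext n
  rw [show derivativeFun (fbar j) = d⁄dX (ZMod 2) (fbar j) from rfl, coeff_derivativeFun, map_zero]
  rcases Nat.even_or_odd (n + 1) with he | ho
  · have hodd : Odd n := by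
      rcases he with ⟨t, ht⟩
      exact ⟨t - 1, by omega⟩
    have hz : (n : ZMod 2) + 1 = 0 := by
      rw [natCast_zmod_two, if_pos hodd]
      decide
    rw [hz, mul_zero]
  · rw [coeff_fbar, coeff_pser_eq_zero, zero_mul]
    intro hdvd
    obtain ⟨k, hk⟩ := hj
    obtain ⟨c, hc⟩ := hdvd
    obtain ⟨t, ht⟩ := ho
    rw [hk] at hc
    have : (k + k) * c = 2 * (k * c) := by ring
    omega

end Z2c

section Final

noncomputable def mpH : PowerSeries ℤ →+* PowerSeries (ZMod 2) :=
  PowerSeries.map (Int.castRingHom (ZMod 2))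

noncomputable def ubar (j : ℕ) : (PowerSeries (ZMod 2))ˣ :=
  Units.map mpH.toMonoidHom (etaU j)

lemma ubar_val (j : ℕ) : (ubar j : PowerSeries (ZMod 2)) = fbar j := by
  rw [ubar, Units.coe_map, etaU_val]
  rfl

lemma elog_ubar_one : elog (ubar 1) = Sg := by
  apply elog_eq_of
  rw [ubar_val]
  exact main_identity

lemma elog_ubar_even {j : ℕ} (hj : Even j) : elog (ubar j) = 0 := by
  rw [elog, ubar_val, derivativeFun_fbar_even hj, mul_zero, mul_zero]

lemma intCast_zmod_two (z : ℤ) : (z : ZMod 2) = if Odd z then 1 else 0 := by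
  rcases Int.even_or_odd z with ⟨k, rfl⟩ | ⟨k, rfl⟩
  · rw [if_neg (Int.not_odd_iff_even.mpr ⟨k, rfl⟩)]
    push_cast
    exact CharTwo.add_self_eq_zero _
  · rw [if_pos ⟨k, rfl⟩]
    push_cast
    rw [show (2 : ZMod 2) = 0 by decide, zero_mul, zero_add]

lemma cast_eq_zero_iff_even (c : ℕ) : ((c : ZMod 2) = 0) ↔ Even c := by
  rw [natCast_zmod_two]
  by_cases h : Odd c
  · rw [if_pos h]
    simp [Nat.not_even_iff_odd.mpr h]
  · rw [if_neg h]
    simp [Nat.not_odd_iff_even.mp h]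

end Final


theorem stmt2 (S : Finset ℕ) (hpos : ∀ j ∈ S, 0 < j) (e : ℕ → ℤ)
    (h1 : 1 ∈ S) (h1odd : Odd (e 1))
    (heven : ∀ j ∈ S, 1 < j → Odd j → Even (e j))
    (A : PowerSeries ℤ)
    (hA : A = ↑(∏ j ∈ S, (etaU j) ^ (e j))) :
    (∀ N : ℕ,
      (Even (PowerSeries.coeff N A) ∨ (Even N ∧ Odd (PowerSeries.coeff N A))) →
      Even (Set.ncard
        {p : ℕ × ℕ | Odd (PowerSeries.coeff p.1 A) ∧ p.2 ∈ SSq ∧ p.1 + p.2 = N})) ∧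
    (∀ N : ℕ, Odd N → Odd (PowerSeries.coeff N A) →
      Odd (Set.ncard
        {p : ℕ × ℕ | Odd (PowerSeries.coeff p.1 A) ∧ p.2 ∈ SSq ∧ p.1 + p.2 = N})) := by
  classical
  have hAbar : PowerSeries.map (Int.castRingHom (ZMod 2)) A
      = ((∏ j ∈ S, (ubar j) ^ (e j) : (PowerSeries (ZMod 2))ˣ) : PowerSeries (ZMod 2)) := by
    rw [hA]
    have h2 : (∏ j ∈ S, (ubar j) ^ (e j)) = Units.map mpH.toMonoidHom (∏ j ∈ S, (etaU j) ^ (e j)) := by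
      rw [map_prod]
      exact Finset.prod_congr rfl fun j _ => (map_zpow (Units.map mpH.toMonoidHom) (etaU j) (e j)).symm
    rw [h2, Units.coe_map]
    rfl
  have helog : elog (∏ j ∈ S, (ubar j) ^ (e j)) = Sg := by
    rw [elog_prod]
    rw [Finset.sum_eq_single_of_mem 1 h1]
    · rw [elog_zpow, elog_ubar_one, zsmul_odd_ps h1odd]
    · intro j hj hne
      rcases Nat.even_or_odd j with hje | hjo
      · rw [elog_zpow, elog_ubar_even hje, smul_zero]
      · have hj1 : 1 < j := lt_of_le_of_ne (hpos j hj) (Ne.symm hne)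
        rw [elog_zpow, zsmul_even_ps (heven j hj hj1 hjo)]
  have hkey0 : X * derivativeFun (PowerSeries.map (Int.castRingHom (ZMod 2)) A)
      = PowerSeries.map (Int.castRingHom (ZMod 2)) A * Sg := by
    rw [hAbar, X_mul_derivativeFun_eq, helog]
  set ab : ℕ → ZMod 2 := fun n => ((coeff n A : ℤ) : ZMod 2) with hab
  have hcoeff : ∀ n, coeff n (PowerSeries.map (Int.castRingHom (ZMod 2)) A) = ab n :=
    fun n => coeff_map _ _ _
  have habif : ∀ n, ab n = if Odd (coeff n A) then 1 else 0 :=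
    fun n => intCast_zmod_two _
  have key : ∀ N : ℕ, (N : ZMod 2) * ab N
      = (((antidiagonal N).filter (fun p : ℕ × ℕ => Odd (coeff p.1 A) ∧ p.2 ∈ SSq)).card : ZMod 2) := by
    intro N
    have h := congrArg (coeff N) hkey0
    rw [coeff_X_mul_derivativeFun, hcoeff, coeff_mul] at h
    rw [h, ← Finset.sum_boole]
    apply Finset.sum_congr rfl
    intro p _
    rw [hcoeff, habif, coeff_Sg]
    by_cases hP : Odd (coeff p.1 A) <;> by_cases hQ : p.2 ∈ SSq <;>
      simp [hP, hQ]
  have hset : ∀ N : ℕ, {p : ℕ × ℕ | Odd (PowerSeries.coeff p.1 A) ∧ p.2 ∈ SSq ∧ p.1 + p.2 = N}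
      = ↑((antidiagonal N).filter (fun p : ℕ × ℕ => Odd (coeff p.1 A) ∧ p.2 ∈ SSq)) := by
    intro N
    ext p
    simp only [Set.mem_setOf_eq, Finset.coe_filter, Finset.HasAntidiagonal.mem_antidiagonal, Set.mem_setOf_eq]
    tauto
  constructor
  · intro N hN
    rw [hset N, Set.ncard_coe_finset]
    apply (cast_eq_zero_iff_even _).mp
    rw [← key N]
    rcases hN with hev | ⟨hNe, _⟩
    · rw [habif N, if_neg (Int.not_odd_iff_even.mpr hev), mul_zero]
    · rw [(cast_eq_zero_iff_even N).mpr hNe, zero_mul]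
  · intro N hNodd hodd
    rw [hset N, Set.ncard_coe_finset]
    rw [← Nat.not_even_iff_odd]
    intro hev
    have h0 : ((((antidiagonal N).filter (fun p : ℕ × ℕ => Odd (coeff p.1 A) ∧ p.2 ∈ SSq)).card : ℕ) : ZMod 2) = 0 :=
      (cast_eq_zero_iff_even _).mpr hev
    rw [← key N, habif N, if_pos hodd, mul_one, natCast_zmod_two, if_pos hNodd] at h0
    exact one_ne_zero h0
end

section
/- Let p(n) denote the number of partitions of n (with p(0) = 1), and let S_□ := {k^2 : k ≥ 1} ∪ {2k^2 : k ≥ 1}. (i) For any nonnegative integer N such that p(N) is even, or such that N is even and p(N) is odd, the cardinality of {(m, s) ∈ ℕ × ℕ : p(m) is odd, s ∈ S_□, m + s = N} is even. (ii) For any odd N with p(N) odd, the cardinality of {(m, s) ∈ ℕ × ℕ : p(m) is odd, s ∈ S_□, m + s = N} is odd. -/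
/-- The number of unrestricted partitions of `n` (so `partitionCount 0 = 1`). -/
def partitionCount (n : ℕ) : ℕ := Fintype.card (Nat.Partition n)

open Finset Nat ArithmeticFunction
open scoped ArithmeticFunction.sigma


lemma odd_sigma_pp {p e : ℕ} (hp : p.Prime) : Odd (σ 1 (p ^ e)) ↔ (p = 2 ∨ Even e) := by
  rw [sigma_one_apply_prime_pow hp]
  rcases eq_or_ne p 2 with rfl | h2
  · simp only [true_or, iff_true]
    induction e with
    | zero => simp
    | succ n ih =>
      rw [Finset.sum_range_succ]
      exact ih.add_even (even_pow.2 ⟨even_two, by omega⟩)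
  · have hodd : Odd p := hp.odd_of_ne_two h2
    have h1 : ∀ i, (p ^ i) % 2 = 1 := fun i => Nat.odd_iff.1 (hodd.pow)
    rw [Nat.odd_iff, Finset.sum_nat_mod]
    simp only [h1, Finset.sum_const, Finset.card_range, smul_eq_mul, mul_one]
    rw [Nat.even_iff]
    constructor
    · intro h; right; omega
    · rintro (h | h); · exact absurd h h2
      · omega

lemma odd_sigma_iff {n : ℕ} (hn : n ≠ 0) :
    Odd (σ 1 n) ↔ ∀ p, p.Prime → p ≠ 2 → Even (n.factorization p) := by
  rw [isMultiplicative_sigma.multiplicative_factorization _ hn, Finsupp.prod]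
  have hodd : Odd (∏ p ∈ n.factorization.support, σ 1 (p ^ n.factorization p)) ↔
      ∀ p ∈ n.factorization.support, Odd (σ 1 (p ^ n.factorization p)) := by
    rw [← Nat.not_even_iff_odd, even_iff_two_dvd,
      (Nat.prime_iff.1 Nat.prime_two).dvd_finset_prod_iff]
    push_neg
    simp only [← Nat.not_even_iff_odd, even_iff_two_dvd]
  rw [hodd]
  constructor
  · intro h p hp hp2
    by_cases hmem : p ∈ n.factorization.support
    · rcases (odd_sigma_pp (by rwa [Nat.support_factorization] at hmem;) ).1 (h p hmem) with h2 | h2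
      · exact absurd h2 hp2
      · exact h2
    · rw [Finsupp.notMem_support_iff.1 hmem]; exact Even.zero
  · intro h p hmem
    have hp : p.Prime := Nat.prime_of_mem_primeFactors (by rwa [Nat.support_factorization] at hmem)
    refine (odd_sigma_pp hp).2 ?_
    rcases eq_or_ne p 2 with rfl | h2
    · exact Or.inl rfl
    · exact Or.inr (h p hp h2)

lemma sq_of_forall_even {n : ℕ} (hn : n ≠ 0) (h : ∀ p, Even (n.factorization p)) :
    ∃ k, 1 ≤ k ∧ n = k ^ 2 := by
  have hk : (n.factorization.prod fun p e => p ^ (e / 2)) ^ 2 = n := by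
    conv_rhs => rw [← Nat.factorization_prod_pow_eq_self hn]
    rw [Finsupp.prod, Finsupp.prod, ← Finset.prod_pow]
    refine Finset.prod_congr rfl fun p _ => ?_
    rw [← pow_mul, Nat.div_mul_cancel (h p).two_dvd]
  refine ⟨_, ?_, hk.symm⟩
  rw [Nat.one_le_iff_ne_zero]
  rintro h0
  rw [h0] at hk
  simp at hk
  exact hn hk.symm

lemma mem_SSq_iff_s4 {n : ℕ} (hn : n ≠ 0) :
    n ∈ SSq ↔ ∀ p, p.Prime → p ≠ 2 → Even (n.factorization p) := by
  simp only [SSq, Set.mem_union, Set.mem_setOf_eq]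
  constructor
  · rintro (⟨k, hk, rfl⟩ | ⟨k, hk, rfl⟩) p hp hp2
    · rw [Nat.factorization_pow]
      exact ⟨k.factorization p, two_mul _⟩
    · rw [Nat.factorization_mul two_ne_zero (by positivity), Nat.factorization_pow]
      rw [Nat.Prime.factorization Nat.prime_two]
      simp only [Finsupp.coe_add, Pi.add_apply, Finsupp.smul_apply, smul_eq_mul]
      rw [Finsupp.single_apply, if_neg (by omega : ¬ (2 : ℕ) = p)]
      exact ⟨k.factorization p, by ring⟩
  · intro h
    rcases Nat.even_or_odd (n.factorization 2) with he | ho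
    · have hall : ∀ p, Even (n.factorization p) := by
        intro p
        by_cases hp : p.Prime
        · rcases eq_or_ne p 2 with rfl | hp2
          · exact he
          · exact h p hp hp2
        · rw [Nat.factorization_eq_zero_of_not_prime _ hp]; exact Even.zero
      obtain ⟨k, hk1, hk2⟩ := sq_of_forall_even hn hall
      exact Or.inl ⟨k, hk1, hk2⟩
    · have h2 : 2 ∣ n := Nat.dvd_of_factorization_pos (by rcases ho with ⟨c, hc⟩; omega)
      obtain ⟨m, rfl⟩ := h2
      have hm : m ≠ 0 := by rintro rfl; simp at hn
      have hfact : (2 * m).factorization = (Finsupp.single 2 1) + m.factorization := by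
        rw [Nat.factorization_mul two_ne_zero hm, Nat.Prime.factorization Nat.prime_two]
      have hfm : ∀ p, Even (m.factorization p) := by
        intro p
        by_cases hp : p.Prime
        · rcases eq_or_ne p 2 with rfl | hp2
          · have := ho
            rw [hfact] at this
            simp only [Finsupp.coe_add, Pi.add_apply, Finsupp.single_eq_same] at this
            rcases this with ⟨c, hc⟩
            exact ⟨c, by omega⟩
          · have := h p hp hp2
            rw [hfact, Finsupp.add_apply, Finsupp.single_apply,
              if_neg (by omega : ¬ (2:ℕ) = p)] at this
            simpa using this
        · rw [Nat.factorization_eq_zero_of_not_prime _ hp]; exact Even.zero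
      obtain ⟨k, hk1, hk2⟩ := sq_of_forall_even hm hfm
      exact Or.inr ⟨k, hk1, by rw [hk2]⟩


lemma partitionCount_eq_card_filter {n d m : ℕ} (hd : 1 ≤ d) (hm : 1 ≤ m) (hdm : d * m ≤ n) :
    partitionCount (n - d * m) =
      (Finset.univ.filter fun lam : n.Partition => m ≤ lam.parts.count d).card := by
  classical
  rw [partitionCount, ← Finset.card_univ]
  refine Finset.card_bij
    (fun mu _ => ⟨mu.parts + Multiset.replicate m d, ?_, ?_⟩) ?_ ?_ ?_
  · intro i hi
    rcases Multiset.mem_add.1 hi with h | h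
    · exact mu.parts_pos h
    · rw [Multiset.eq_of_mem_replicate h]; omega
  · rw [Multiset.sum_add, mu.parts_sum, Multiset.sum_replicate, smul_eq_mul, mul_comm m d]
    omega
  · intro mu _
    simp only [Finset.mem_filter, Finset.mem_univ, true_and]
    rw [Multiset.count_add, Multiset.count_replicate_self]
    omega
  · intro a _ b _ h
    have := congrArg Nat.Partition.parts h
    simp only at this
    exact Nat.Partition.ext (add_right_cancel this)
  · intro lam hlam
    simp only [Finset.mem_filter, Finset.mem_univ, true_and] at hlam
    have hrep : Multiset.replicate m d ≤ lam.parts :=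
      Multiset.le_count_iff_replicate_le.1 hlam
    have hadd : lam.parts - Multiset.replicate m d + Multiset.replicate m d = lam.parts :=
      tsub_add_cancel_of_le hrep
    have hsum : (lam.parts - Multiset.replicate m d).sum = n - d * m := by
      have := congrArg Multiset.sum hadd
      rw [Multiset.sum_add, lam.parts_sum, Multiset.sum_replicate, smul_eq_mul,
        mul_comm m d] at this
      omega
    refine ⟨⟨lam.parts - Multiset.replicate m d, ?_, hsum⟩, Finset.mem_univ _, ?_⟩
    · intro i hi
      exact lam.parts_pos (Multiset.mem_of_le (tsub_le_self) hi)
    · exact Nat.Partition.ext hadd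

lemma count_facts {n d : ℕ} (hd : 1 ≤ d) (lam : n.Partition) :
    lam.parts.count d ≤ n ∧ d * lam.parts.count d ≤ n := by
  classical
  have hrep : Multiset.replicate (lam.parts.count d) d ≤ lam.parts :=
    Multiset.le_count_iff_replicate_le.1 le_rfl
  obtain ⟨u, hu⟩ := Multiset.le_iff_exists_add.1 hrep
  have := congrArg Multiset.sum hu
  rw [Multiset.sum_add, lam.parts_sum, Multiset.sum_replicate, smul_eq_mul,
    mul_comm] at this
  constructor
  · nlinarith [Multiset.sum_nonneg (s := u) (fun x _ => Nat.zero_le x)]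
  · omega

lemma sum_count_eq {n : ℕ} (lam : n.Partition) :
    ∑ d ∈ Icc 1 n, d * lam.parts.count d = n := by
  classical
  have h1 : lam.parts.sum = ∑ a ∈ lam.parts.toFinset, lam.parts.count a • a := by
    conv_lhs => rw [← Multiset.map_id' lam.parts]
    exact Finset.sum_multiset_map_count _ _
  have hsub : lam.parts.toFinset ⊆ Icc 1 n := by
    intro a ha
    rw [Multiset.mem_toFinset] at ha
    rw [Finset.mem_Icc]
    refine ⟨lam.parts_pos ha, ?_⟩
    calc a ≤ lam.parts.sum := Multiset.single_le_sum (fun x _ => Nat.zero_le x) _ ha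
    _ = n := lam.parts_sum
  have h2 : ∑ a ∈ lam.parts.toFinset, lam.parts.count a • a
      = ∑ a ∈ Icc 1 n, lam.parts.count a • a := by
    refine Finset.sum_subset hsub fun x _ hx => ?_
    rw [Multiset.count_eq_zero_of_notMem (by simpa using hx)]
    simp
  calc ∑ d ∈ Icc 1 n, d * lam.parts.count d
      = ∑ a ∈ Icc 1 n, lam.parts.count a • a := by
        refine Finset.sum_congr rfl fun x _ => ?_; rw [smul_eq_mul, mul_comm]
    _ = lam.parts.sum := by rw [← h2, ← h1]
    _ = n := lam.parts_sum

lemma partition_recurrence (n : ℕ) :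
    n * partitionCount n = ∑ k ∈ Icc 1 n, σ 1 k * partitionCount (n - k) := by
  classical
  -- rewrite sigma as a sum over divisorsAntidiagonal
  have R1 : ∑ k ∈ Icc 1 n, σ 1 k * partitionCount (n - k)
      = ∑ k ∈ Icc 1 n, ∑ q ∈ k.divisorsAntidiagonal,
          q.1 * partitionCount (n - q.1 * q.2) := by
    refine Finset.sum_congr rfl fun k hk => ?_
    have : ∑ q ∈ k.divisorsAntidiagonal, q.1 * partitionCount (n - q.1 * q.2)
        = ∑ q ∈ k.divisorsAntidiagonal, q.1 * partitionCount (n - k) := by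
      refine Finset.sum_congr rfl fun q hq => ?_
      rw [(Nat.mem_divisorsAntidiagonal.1 hq).1]
    rw [this, ← Finset.sum_mul]
    congr 1
    rw [sigma_one_apply]
    exact (Nat.sum_divisorsAntidiagonal (fun d _ => d)).symm
  -- combine the double sum into a sum over a filtered product
  set U : Finset (ℕ × ℕ) := (Icc 1 n ×ˢ Icc 1 n).filter (fun q => q.1 * q.2 ≤ n) with hU
  have R2 : ∑ k ∈ Icc 1 n, ∑ q ∈ k.divisorsAntidiagonal,
        q.1 * partitionCount (n - q.1 * q.2)
      = ∑ q ∈ U, q.1 * partitionCount (n - q.1 * q.2) := by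
    rw [← Finset.sum_biUnion]
    · congr 1
      ext ⟨d, e⟩
      simp only [Finset.mem_biUnion, Nat.mem_divisorsAntidiagonal, hU, Finset.mem_filter,
        Finset.mem_product, Finset.mem_Icc]
      constructor
      · rintro ⟨k, hk, hde, hk0⟩
        have hd : 1 ≤ d := by by_contra h; push_neg at h; interval_cases d <;> omega
        have he : 1 ≤ e := by by_contra h; push_neg at h; interval_cases e <;> omega
        have hd2 : d ≤ d * e := Nat.le_mul_of_pos_right d he
        have he2 : e ≤ d * e := Nat.le_mul_of_pos_left e hd
        omega
      · rintro ⟨⟨⟨hd1, hd2⟩, he1, he2⟩, hde⟩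
        exact ⟨d * e, ⟨Nat.mul_pos hd1 he1, hde⟩, rfl, by positivity⟩
    · intro k1 hk1 k2 hk2 hne
      simp only [Function.onFun]
      rw [Finset.disjoint_left]
      intro q hq1 hq2
      exact hne ((Nat.mem_divisorsAntidiagonal.1 hq1).1.symm.trans
        (Nat.mem_divisorsAntidiagonal.1 hq2).1)
  -- split into iterated sum
  have R3 : ∑ q ∈ U, q.1 * partitionCount (n - q.1 * q.2)
      = ∑ d ∈ Icc 1 n, ∑ e ∈ Icc 1 n,
          (if d * e ≤ n then d * partitionCount (n - d * e) else 0) := by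
    rw [hU, Finset.sum_filter, Finset.sum_product]
  -- inner sum evaluates to d * (sum over partitions of count)
  have R4 : ∀ d ∈ Icc 1 n, ∑ e ∈ Icc 1 n,
        (if d * e ≤ n then d * partitionCount (n - d * e) else 0)
      = d * ∑ lam ∈ (Finset.univ : Finset n.Partition), lam.parts.count d := by
    intro d hd
    have hd1 : 1 ≤ d := (Finset.mem_Icc.1 hd).1
    have step1 : ∑ e ∈ Icc 1 n, (if d * e ≤ n then d * partitionCount (n - d * e) else 0)
        = ∑ e ∈ Icc 1 n, ∑ lam ∈ (Finset.univ : Finset n.Partition),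
            d * (if d * e ≤ n ∧ e ≤ lam.parts.count d then 1 else 0) := by
      refine Finset.sum_congr rfl fun e he => ?_
      have he1 : 1 ≤ e := (Finset.mem_Icc.1 he).1
      by_cases h : d * e ≤ n
      · rw [if_pos h, partitionCount_eq_card_filter hd1 he1 h, Finset.card_filter,
          Finset.mul_sum]
        refine Finset.sum_congr rfl fun lam _ => ?_
        congr 1
        simp [h]
      · rw [if_neg h]
        symm
        refine Finset.sum_eq_zero fun lam _ => ?_
        rw [if_neg (by tauto), mul_zero]
    rw [step1, Finset.sum_comm, Finset.mul_sum]
    refine Finset.sum_congr rfl fun lam _ => ?_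
    rw [← Finset.mul_sum]
    congr 1
    rw [← Finset.card_filter]
    have hc := count_facts hd1 lam
    have hfe : (Icc 1 n).filter (fun e => d * e ≤ n ∧ e ≤ lam.parts.count d)
        = Icc 1 (lam.parts.count d) := by
      ext e
      simp only [Finset.mem_filter, Finset.mem_Icc]
      constructor
      · rintro ⟨⟨he1, _⟩, _, hec⟩; exact ⟨he1, hec⟩
      · rintro ⟨he1, hec⟩
        exact ⟨⟨he1, le_trans hec hc.1⟩, le_trans (Nat.mul_le_mul_left d hec) hc.2, hec⟩
    rw [hfe, Nat.card_Icc]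
    omega
  rw [R1, R2, R3, Finset.sum_congr rfl R4]
  have swap : ∑ d ∈ Icc 1 n, d * ∑ lam ∈ (Finset.univ : Finset n.Partition),
        lam.parts.count d
      = ∑ lam ∈ (Finset.univ : Finset n.Partition), ∑ d ∈ Icc 1 n,
        d * lam.parts.count d := by
    simp only [Finset.mul_sum]
    exact Finset.sum_comm
  rw [swap]
  have : ∀ lam ∈ (Finset.univ : Finset n.Partition),
      ∑ d ∈ Icc 1 n, d * lam.parts.count d = n := fun lam _ => sum_count_eq lam
  rw [Finset.sum_congr rfl this, Finset.sum_const, Finset.card_univ, smul_eq_mul,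
    partitionCount, mul_comm]


lemma SSq_pos {s : ℕ} (h : s ∈ SSq) : 1 ≤ s := by
  rcases h with ⟨k, hk, rfl⟩ | ⟨k, hk, rfl⟩ <;> nlinarith

lemma cast2 (x : ℕ) : (x : ZMod 2) = if Odd x then 1 else 0 := by
  rcases Nat.even_or_odd x with h | h
  · rw [if_neg (by simpa [Nat.not_odd_iff_even] using h)]
    exact (CharP.cast_eq_zero_iff (ZMod 2) 2 x).2 h.two_dvd
  · rw [if_pos h]
    obtain ⟨c, rfl⟩ := h
    push_cast
    rw [(by decide : (2 : ZMod 2) = 0)]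
    ring

lemma odd_iff_cast2 (x : ℕ) : Odd x ↔ (x : ZMod 2) = 1 := by
  rw [cast2]; split_ifs with h <;> simp [h]

lemma even_iff_cast2 (x : ℕ) : Even x ↔ (x : ZMod 2) = 0 := by
  rw [cast2]; split_ifs with h <;>
    simp [h, Nat.not_even_iff_odd, Nat.not_odd_iff_even, ← Nat.not_odd_iff_even] <;> tauto

lemma key_parity (N : ℕ) :
    ((Set.ncard {p : ℕ × ℕ | Odd (partitionCount p.1) ∧ p.2 ∈ SSq ∧ p.1 + p.2 = N} : ℕ)
      : ZMod 2) = (N : ZMod 2) * (partitionCount N : ZMod 2) := by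
  classical
  set F : Finset ℕ :=
    (Icc 1 N).filter (fun s => s ∈ SSq ∧ Odd (partitionCount (N - s))) with hF
  have hset : {p : ℕ × ℕ | Odd (partitionCount p.1) ∧ p.2 ∈ SSq ∧ p.1 + p.2 = N}
      = ↑(F.image (fun s => (N - s, s))) := by
    ext ⟨a, b⟩
    simp only [Set.mem_setOf_eq, Finset.coe_image, Set.mem_image, Finset.mem_coe, hF,
      Finset.mem_filter, Finset.mem_Icc, Prod.mk.injEq]
    constructor
    · rintro ⟨ha, hb, hab⟩
      exact ⟨b, ⟨⟨SSq_pos hb, by omega⟩, hb, by rwa [show N - b = a by omega]⟩, by omega, rfl⟩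
    · rintro ⟨s, ⟨⟨hs1, hs2⟩, hs3, hs4⟩, rfl, rfl⟩
      exact ⟨hs4, hs3, by omega⟩
  rw [hset, Set.ncard_coe_finset, Finset.card_image_of_injective _
    (fun x y hxy => (Prod.ext_iff.1 hxy).2)]
  have hcard : (F.card : ZMod 2)
      = ∑ s ∈ Icc 1 N, ((σ 1 s : ℕ) : ZMod 2) * ((partitionCount (N - s) : ℕ) : ZMod 2) := by
    rw [hF, Finset.card_filter]
    push_cast
    refine Finset.sum_congr rfl fun s hs => ?_
    have hs0 : s ≠ 0 := by have := (Finset.mem_Icc.1 hs).1; omega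
    have hSSq : s ∈ SSq ↔ Odd (σ 1 s) := (mem_SSq_iff_s4 hs0).trans (odd_sigma_iff hs0).symm
    rw [cast2, cast2]
    split_ifs with h1 h2 h3 h4 h5 <;> simp_all <;> tauto
  rw [hcard]
  have : ∑ s ∈ Icc 1 N, ((σ 1 s : ℕ) : ZMod 2) * ((partitionCount (N - s) : ℕ) : ZMod 2)
      = ((∑ s ∈ Icc 1 N, σ 1 s * partitionCount (N - s) : ℕ) : ZMod 2) := by push_cast; rfl
  rw [this, ← partition_recurrence]
  push_cast
  ring

theorem stmt4 :
    (∀ N : ℕ,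
      (Even (partitionCount N) ∨ (Even N ∧ Odd (partitionCount N))) →
      Even (Set.ncard
        {p : ℕ × ℕ | Odd (partitionCount p.1) ∧ p.2 ∈ SSq ∧ p.1 + p.2 = N})) ∧
    (∀ N : ℕ, Odd N → Odd (partitionCount N) →
      Odd (Set.ncard
        {p : ℕ × ℕ | Odd (partitionCount p.1) ∧ p.2 ∈ SSq ∧ p.1 + p.2 = N})) := by
  constructor
  · intro N h
    rw [even_iff_cast2, key_parity N]
    rcases h with h | ⟨h1, h2⟩
    · rw [(even_iff_cast2 _).1 h, mul_zero]
    · rw [(even_iff_cast2 _).1 h1, zero_mul]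
  · intro N h1 h2
    rw [odd_iff_cast2, key_parity N, (odd_iff_cast2 _).1 h1, (odd_iff_cast2 _).1 h2, mul_one]
end

section
/- Every coefficient of the formal power series f_3 · (f_1^3)^{-1} − (2·f_1^3 · f_3^{-1} − 1) in ℤ⟦q⟧ is divisible by 9; that is, f_3/f_1^3 ≡ 2·f_1^3/f_3 − 1 (mod 9) coefficientwise. -/
open PowerSeries Finset

/-- Auxiliary truncated product. -/
noncomputable def etaP (j N : ℕ) : PowerSeries ℤ :=
  ∏ n ∈ Finset.Icc 1 N, (1 - (PowerSeries.X : PowerSeries ℤ) ^ (j * n))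

lemma etaF_trunc (j : ℕ) (hj : 1 ≤ j) (N : ℕ) :
    (X : PowerSeries ℤ) ^ (N + 1) ∣ etaF j - etaP j N := by
  rw [PowerSeries.X_pow_dvd_iff]
  intro m hm
  have hmN : m ≤ N := Nat.lt_succ_iff.mp hm
  rw [map_sub, sub_eq_zero]
  have hc : (coeff m) (etaF j) = (coeff m) (etaP j m) := by
    simp [etaF, etaP]
  rw [hc]
  have hsplit : etaP j N = etaP j m * ∏ n ∈ Finset.Ioc m N, (1 - (X : PowerSeries ℤ) ^ (j * n)) := by
    unfold etaP
    rw [show Finset.Icc 1 N = Finset.Ioc 0 N by rfl, show Finset.Icc 1 m = Finset.Ioc 0 m by rfl]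
    exact (Finset.prod_Ioc_consecutive _ (Nat.zero_le m) hmN).symm
  have hQ : (X : PowerSeries ℤ) ^ (m + 1) ∣
      (∏ n ∈ Finset.Ioc m N, (1 - (X : PowerSeries ℤ) ^ (j * n))) - 1 := by
    refine Finset.prod_induction _ (fun g => (X : PowerSeries ℤ) ^ (m + 1) ∣ g - 1) ?_ (by simp) ?_
    · intro a b ha hb
      have h : a * b - 1 = a * (b - 1) + (a - 1) := by ring
      rw [h]
      exact dvd_add (Dvd.dvd.mul_left hb a) ha
    · intro n hn
      simp only [Finset.mem_Ioc] at hn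
      have h : (1 : PowerSeries ℤ) - X ^ (j * n) - 1 = -(X ^ (j * n)) := by ring
      rw [h]
      exact dvd_neg.mpr (pow_dvd_pow X (le_trans hn.1 (Nat.le_mul_of_pos_left n hj)))
  obtain ⟨g, hg⟩ := hQ
  have h2 : etaP j N = etaP j m + etaP j m * ((X : PowerSeries ℤ) ^ (m + 1) * g) := by
    rw [hsplit, ← hg]; ring
  rw [h2, map_add]
  have hz : (coeff m) (etaP j m * (X ^ (m + 1) * g)) = 0 :=
    PowerSeries.X_pow_dvd_iff.mp (Dvd.dvd.mul_left (dvd_mul_right _ _) _) m (Nat.lt_succ_self m)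
  rw [hz, add_zero]

instance : CharP (PowerSeries (ZMod 3)) 3 :=
  charP_of_injective_ringHom PowerSeries.C_injective 3

lemma key3 (N : ℕ) : (3 : ℤ) ∣ PowerSeries.coeff N (etaF 3 - etaF 1 ^ 3) := by
  obtain ⟨g, hg⟩ := etaF_trunc 1 le_rfl N
  obtain ⟨h, hh⟩ := etaF_trunc 3 (by norm_num) N
  have h1 : etaF 1 = etaP 1 N + X ^ (N + 1) * g := by
    rw [← hg]; ring
  have h3 : etaF 3 = etaP 3 N + X ^ (N + 1) * h := by
    rw [← hh]; ring
  have hsplit : etaF 3 - etaF 1 ^ 3 = (etaP 3 N - etaP 1 N ^ 3) +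
      X ^ (N + 1) * (h - (3 * etaP 1 N ^ 2 * g + 3 * etaP 1 N * (X ^ (N + 1)) * g ^ 2
        + (X ^ (N + 1)) ^ 2 * g ^ 3)) := by
    rw [h1, h3]; ring
  rw [hsplit, map_add]
  have hz : (coeff N) (X ^ (N + 1) * (h - (3 * etaP 1 N ^ 2 * g
      + 3 * etaP 1 N * (X ^ (N + 1)) * g ^ 2 + (X ^ (N + 1)) ^ 2 * g ^ 3))) = 0 :=
    PowerSeries.X_pow_dvd_iff.mp (dvd_mul_right _ _) N (Nat.lt_succ_self N)
  rw [hz, add_zero]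
  rw [show (3:ℤ) = ((3:ℕ):ℤ) by norm_num, ← ZMod.intCast_zmod_eq_zero_iff_dvd]
  have hmap : ((PowerSeries.coeff N (etaP 3 N - etaP 1 N ^ 3) : ℤ) : ZMod 3) =
      PowerSeries.coeff N
        (PowerSeries.map (Int.castRingHom (ZMod 3)) (etaP 3 N - etaP 1 N ^ 3)) := by
    rw [PowerSeries.coeff_map]; rfl
  rw [hmap]
  have hzero : PowerSeries.map (Int.castRingHom (ZMod 3)) (etaP 3 N - etaP 1 N ^ 3) = 0 := by
    unfold etaP
    rw [map_sub, map_pow, map_prod, map_prod]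
    simp only [map_sub, map_one, map_pow, PowerSeries.map_X, one_mul]
    rw [← Finset.prod_pow, sub_eq_zero]
    refine Finset.prod_congr rfl fun n _ => ?_
    symm
    have hch := sub_pow_char (1 : PowerSeries (ZMod 3)) ((X : PowerSeries (ZMod 3)) ^ n) (p := 3)
    rw [hch, one_pow, ← pow_mul, mul_comm n 3]
  rw [hzero, map_zero]

lemma coeff_mul_dvd {a b : ℤ} {f g : PowerSeries ℤ}
    (hf : ∀ n, a ∣ PowerSeries.coeff n f) (hg : ∀ n, b ∣ PowerSeries.coeff n g) (n : ℕ) :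
    a * b ∣ PowerSeries.coeff n (f * g) := by
  rw [PowerSeries.coeff_mul]
  exact Finset.dvd_sum fun p _ => mul_dvd_mul (hf p.1) (hg p.2)

/-- `f_3/f_1^3 ≡ 2·f_1^3/f_3 - 1 (mod 9)` coefficientwise. -/
theorem stmt11 :
    ∀ N : ℕ, (9 : ℤ) ∣ PowerSeries.coeff N
      (etaF 3 * ↑((etaU 1) ^ 3)⁻¹ - (2 * (etaF 1) ^ 3 * ↑(etaU 3)⁻¹ - 1)) := by
  intro N
  set A : PowerSeries ℤ := etaF 1 ^ 3 with hA
  set B : PowerSeries ℤ := etaF 3 with hB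
  set u : PowerSeries ℤ := ↑((etaU 1) ^ 3)⁻¹ with hu
  set v : PowerSeries ℤ := ↑(etaU 3)⁻¹ with hv
  have hAu : A * u = 1 := by
    have := Units.mul_inv ((etaU 1) ^ 3)
    rwa [Units.val_pow_eq_pow_val, etaU_val] at this
  have hBv : B * v = 1 := by
    have := Units.mul_inv (etaU 3)
    rwa [etaU_val] at this
  have hE : B * u - (2 * A * v - 1) = (B - A) * ((B + 2 * A) * (u * v)) := by
    linear_combination (-(B * u) - A * u) * hBv + (2 * A * v - 1) * hAu
  rw [hE]
  have h1 : ∀ n, (3 : ℤ) ∣ PowerSeries.coeff n (B - A) := key3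
  have h2 : ∀ n, (3 : ℤ) ∣ PowerSeries.coeff n ((B + 2 * A) * (u * v)) := by
    have h2' : ∀ n, (3 : ℤ) ∣ PowerSeries.coeff n (B + 2 * A) := by
      intro n
      have he : PowerSeries.coeff n (B + 2 * A) =
          PowerSeries.coeff n (B - A) + 3 * PowerSeries.coeff n A := by
        have : B + 2 * A = (B - A) + (3 : ℤ) • A := by
          rw [zsmul_eq_mul]; push_cast; ring
        rw [this, map_add, map_zsmul, zsmul_eq_mul]
        push_cast
        ring
      rw [he]
      exact dvd_add (h1 n) (Dvd.intro _ rfl)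
    intro n
    have := coeff_mul_dvd (g := u * v) h2' (fun m => one_dvd _) n
    rwa [mul_one] at this
  have := coeff_mul_dvd h1 h2 N
  norm_num at this ⊢
  exact this
end

section
/- Let A(q) = f_1^{3j_1+1} · ∏_{i: 3∤i} f_i^{3j_i} · ∏_{i: 3|i} f_i^{j_i} =: Σ_{n≥0} a_n q^n be any eta quotient of the indicated form (a finite product, all j_i ∈ ℤ), and let B(q) := f_3 · f_1^{-3} · A(q) =: Σ_{n≥0} b_n q^n. Then for every n ≥ 0, a_n ≡ 0 (mod 9) if and only if b_n ≡ 0 (mod 9). -/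
open PowerSeries Finset

noncomputable section

/-- The operator `q d/dq`: multiplies the n-th coefficient by n. -/
def Dq (P : PowerSeries ℤ) : PowerSeries ℤ :=
  PowerSeries.mk fun n => (n : ℤ) * PowerSeries.coeff n P

@[simp] lemma coeff_Dq (P : PowerSeries ℤ) (n : ℕ) :
    PowerSeries.coeff n (Dq P) = (n : ℤ) * PowerSeries.coeff n P := by
  simp [Dq]

lemma Dq_add (P Q : PowerSeries ℤ) : Dq (P + Q) = Dq P + Dq Q := by
  ext n; simp [mul_add]

lemma Dq_one : Dq 1 = 0 := by
  ext n
  simp only [coeff_Dq, PowerSeries.coeff_one, map_zero]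
  rcases Nat.eq_zero_or_pos n with h | h
  · simp [h]
  · simp [Nat.pos_iff_ne_zero.mp h]

lemma Dq_mul (P Q : PowerSeries ℤ) : Dq (P * Q) = P * Dq Q + Q * Dq P := by
  ext n
  rw [mul_comm Q (Dq P)]
  simp only [coeff_Dq, map_add, PowerSeries.coeff_mul, Finset.mul_sum]
  rw [← Finset.sum_add_distrib]
  apply Finset.sum_congr rfl
  intro p hp
  have hab : p.1 + p.2 = n := Finset.HasAntidiagonal.mem_antidiagonal.mp hp
  subst hab
  push_cast
  ring

lemma Dq_pow (P : PowerSeries ℤ) (k : ℕ) : Dq (P ^ k) = (k : ℤ) • (P ^ (k-1) * Dq P) := by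
  induction k with
  | zero => simpa using Dq_one
  | succ k ih =>
    rw [pow_succ, Dq_mul, ih]
    rcases Nat.eq_zero_or_pos k with h | h
    · subst h; simp [Dq_one]
    · have h1 : k - 1 + 1 = k := Nat.succ_pred_eq_of_pos h
      rw [zsmul_eq_mul, zsmul_eq_mul, ← h1]
      push_cast
      ring

/-- logarithmic derivative of a unit power series -/
def ld (u : (PowerSeries ℤ)ˣ) : PowerSeries ℤ := Dq ↑u * ↑u⁻¹

/-- the log-derivative as a monoid hom into the additive group (written multiplicatively) -/
def ldHom : (PowerSeries ℤ)ˣ →* Multiplicative (PowerSeries ℤ) where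
  toFun u := Multiplicative.ofAdd (ld u)
  map_one' := by
    simp [ld, Dq_one]
  map_mul' u v := by
    have : ld (u * v) = ld u + ld v := by
      simp only [ld, Units.val_mul, Dq_mul, mul_inv_rev, Units.val_mul]
      have hu : (u : PowerSeries ℤ) * ↑u⁻¹ = 1 := u.mul_inv
      have hv : (v : PowerSeries ℤ) * ↑v⁻¹ = 1 := v.mul_inv
      calc ((u:PowerSeries ℤ) * Dq ↑v + ↑v * Dq ↑u) * (↑v⁻¹ * ↑u⁻¹)
          = (↑u * ↑u⁻¹) * (Dq ↑v * ↑v⁻¹) + (↑v * ↑v⁻¹) * (Dq ↑u * ↑u⁻¹) := by ring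
        _ = Dq ↑v * ↑v⁻¹ + Dq ↑u * ↑u⁻¹ := by rw [hu, hv, one_mul, one_mul]
        _ = Dq ↑u * ↑u⁻¹ + Dq ↑v * ↑v⁻¹ := by ring
    simp [this]

lemma ld_zpow (u : (PowerSeries ℤ)ˣ) (e : ℤ) : ld (u ^ e) = e • ld u := by
  have := map_zpow ldHom u e
  have h2 : (ldHom (u ^ e)).toAdd = ((ldHom u) ^ e).toAdd := by rw [this]
  simpa [ldHom] using h2

lemma Dq_unit (u : (PowerSeries ℤ)ˣ) : Dq ↑u = ↑u * ld u := by
  have hu : (u : PowerSeries ℤ) * ↑u⁻¹ = 1 := u.mul_inv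
  calc Dq ↑u = Dq ↑u * (↑u * ↑u⁻¹) := by rw [hu, mul_one]
    _ = ↑u * ld u := by rw [ld]; ring

lemma ld_prod (s : Finset ℕ) (f : ℕ → (PowerSeries ℤ)ˣ) :
    ld (∏ i ∈ s, f i) = ∑ i ∈ s, ld (f i) := by
  have := map_prod ldHom f s
  have h2 : (ldHom (∏ i ∈ s, f i)).toAdd = (∏ i ∈ s, ldHom (f i)).toAdd := by rw [this]
  rw [toAdd_prod] at h2
  simp only [ldHom, MonoidHom.coe_mk, OneHom.coe_mk, toAdd_ofAdd] at h2
  exact h2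

/-- truncated eta product -/
def trP (j M : ℕ) : PowerSeries ℤ := ∏ n ∈ Finset.Icc 1 M, (1 - (PowerSeries.X : PowerSeries ℤ) ^ (j * n))

/-- a product of factors `≡ 1 mod X^c` is `≡ 1 mod X^c` -/
lemma prod_one_sub_dvd {c : ℕ} (s : Finset ℕ) (g : ℕ → PowerSeries ℤ)
    (h : ∀ n ∈ s, (X:PowerSeries ℤ)^c ∣ (g n - 1)) :
    (X:PowerSeries ℤ)^c ∣ (∏ n ∈ s, g n) - 1 := by
  classical
  induction s using Finset.induction_on with
  | empty => simp
  | @insert a s' ha ih =>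
    rw [Finset.prod_insert ha]
    have h1 : (X:PowerSeries ℤ)^c ∣ (∏ n ∈ s', g n) - 1 := ih (fun n hn => h n (Finset.mem_insert_of_mem hn))
    have h2 : (X:PowerSeries ℤ)^c ∣ (g a - 1) := h a (Finset.mem_insert_self a s')
    have : g a * (∏ n ∈ s', g n) - 1 = g a * ((∏ n ∈ s', g n) - 1) + (g a - 1) := by ring
    rw [this]
    exact dvd_add (Dvd.dvd.mul_left h1 _) h2

lemma trP_stable (j : ℕ) (hj : 1 ≤ j) {N M : ℕ} (h : N ≤ M) :
    (X:PowerSeries ℤ)^(N+1) ∣ trP j M - trP j N := by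
  have hicc : ∀ K : ℕ, Finset.Icc 1 K = Finset.Ioc 0 K := fun K => Finset.Icc_add_one_left_eq_Ioc 0 K
  have hsplit : trP j M = trP j N * ∏ n ∈ Finset.Ioc N M, (1 - (X:PowerSeries ℤ) ^ (j * n)) := by
    rw [trP, trP, hicc, hicc, Finset.prod_Ioc_consecutive _ (Nat.zero_le N) h]
  have hdvd : (X:PowerSeries ℤ)^(N+1) ∣ (∏ n ∈ Finset.Ioc N M, (1 - (X:PowerSeries ℤ) ^ (j * n))) - 1 := by
    apply prod_one_sub_dvd
    intro n hn
    have hn' : N + 1 ≤ n := (Finset.mem_Ioc.mp hn).1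
    have : N + 1 ≤ j * n := le_trans hn' (Nat.le_mul_of_pos_left n hj)
    have hx : (X:PowerSeries ℤ)^(N+1) ∣ (X:PowerSeries ℤ)^(j*n) := pow_dvd_pow _ this
    simpa using hx.neg_right
  have heq : trP j M - trP j N = trP j N * ((∏ n ∈ Finset.Ioc N M, (1 - (X:PowerSeries ℤ) ^ (j * n))) - 1) := by
    rw [hsplit]; ring
  rw [heq]
  exact Dvd.dvd.mul_left hdvd _

lemma etaF_sub_trP (j : ℕ) (hj : 1 ≤ j) (N : ℕ) :
    (X:PowerSeries ℤ)^(N+1) ∣ etaF j - trP j N := by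
  rw [X_pow_dvd_iff]
  intro m hm
  have hmN : m ≤ N := Nat.lt_succ_iff.mp hm
  have h1 : PowerSeries.coeff m (etaF j) = PowerSeries.coeff m (trP j m) := by
    simp [etaF, trP]
  have h2 : (X:PowerSeries ℤ)^(m+1) ∣ trP j N - trP j m := trP_stable j hj hmN
  have h3 : PowerSeries.coeff m (trP j N - trP j m) = 0 := by
    rw [X_pow_dvd_iff] at h2
    exact h2 m (Nat.lt_succ_self m)
  simp only [map_sub] at h3 ⊢
  omega


lemma ld_def (u : (PowerSeries ℤ)ˣ) : ld u = Dq ↑u * ↑u⁻¹ := rfl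

lemma trP_def (j M : ℕ) : trP j M = ∏ n ∈ Finset.Icc 1 M, (1 - (PowerSeries.X : PowerSeries ℤ) ^ (j * n)) := rfl

lemma coeff_eq_of_X_dvd {P Q : PowerSeries ℤ} {N k : ℕ} (h : (X:PowerSeries ℤ)^(N+1) ∣ P - Q)
    (hk : k ≤ N) : PowerSeries.coeff k P = PowerSeries.coeff k Q := by
  rw [X_pow_dvd_iff] at h
  have := h k (Nat.lt_succ_of_le hk)
  rw [map_sub] at this
  omega

lemma int_dvd_iff (d : ℤ) (P : PowerSeries ℤ) :
    (PowerSeries.C (R := ℤ) d) ∣ P ↔ ∀ n, d ∣ PowerSeries.coeff n P := by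
  constructor
  · rintro ⟨Q, rfl⟩ n
    rw [PowerSeries.coeff_C_mul]
    exact Dvd.intro _ rfl
  · intro h
    refine ⟨PowerSeries.mk fun n => PowerSeries.coeff n P / d, ?_⟩
    ext n
    rw [PowerSeries.coeff_C_mul, PowerSeries.coeff_mk]
    exact (Int.ediv_mul_cancel (h n)).symm ▸ (Int.mul_ediv_cancel' (h n)).symm

lemma ofNat_eq_C (d : ℕ) [d.AtLeastTwo] : ((OfNat.ofNat d : ℤ⟦X⟧)) = PowerSeries.C (R := ℤ) (OfNat.ofNat d) := by
  simp

/-- coefficients of etaF i vanish off multiples of 3 when 3 ∣ i -/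
lemma etaF_support (i : ℕ) (hi : 1 ≤ i) (h3 : 3 ∣ i) (n : ℕ) (hn : ¬ (3 ∣ n)) :
    PowerSeries.coeff n (etaF i) = 0 := by
  have h1 : PowerSeries.coeff n (etaF i) = PowerSeries.coeff n (trP i n) :=
    coeff_eq_of_X_dvd (etaF_sub_trP i hi n) (le_refl n)
  rw [h1, trP_def]
  -- prove the product has support in multiples of 3
  have key : ∀ (s : Finset ℕ), ∀ m : ℕ, ¬ (3 ∣ m) →
      PowerSeries.coeff m (∏ k ∈ s, (1 - (X:PowerSeries ℤ) ^ (i * k))) = 0 := by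
    intro s
    induction s using Finset.induction_on with
    | empty =>
      intro m hm
      have hm0 : m ≠ 0 := by rintro rfl; exact hm (dvd_zero 3)
      simp [PowerSeries.coeff_one, hm0]
    | @insert a s' ha ih =>
      intro m hm
      rw [Finset.prod_insert ha, PowerSeries.coeff_mul]
      apply Finset.sum_eq_zero
      intro p hp
      have hab : p.1 + p.2 = m := Finset.HasAntidiagonal.mem_antidiagonal.mp hp
      by_cases h1 : 3 ∣ p.1
      · have h2 : ¬ 3 ∣ p.2 := by omega
        rw [ih p.2 h2, mul_zero]
      · have : PowerSeries.coeff p.1 (1 - (X:PowerSeries ℤ) ^ (i * a)) = 0 := by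
          rw [map_sub]
          have hone : PowerSeries.coeff p.1 (1 : ℤ⟦X⟧) = 0 := by
            rw [PowerSeries.coeff_one]
            simp only [ite_eq_right_iff]
            intro h; exact absurd (h ▸ dvd_zero 3) h1
          have hxp : PowerSeries.coeff p.1 ((X:PowerSeries ℤ) ^ (i * a)) = 0 := by
            rw [PowerSeries.coeff_X_pow]
            simp only [ite_eq_right_iff]
            intro h
            exact absurd (by rw [h]; exact Dvd.dvd.mul_right h3 a : (3:ℕ) ∣ p.1) h1
          rw [hone, hxp]; ring
        rw [this, zero_mul]
  exact key _ n hn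

lemma three_dvd_Dq_etaF (i : ℕ) (hi : 1 ≤ i) (h3 : 3 ∣ i) :
    (PowerSeries.C (R := ℤ) 3) ∣ Dq (etaF i) := by
  rw [int_dvd_iff]
  intro n
  rw [coeff_Dq]
  by_cases hn : 3 ∣ n
  · exact Dvd.dvd.mul_right (Int.natCast_dvd_natCast.mpr hn) _
  · rw [etaF_support i hi h3 n hn, mul_zero]
    exact dvd_zero 3

lemma coeff_mul_eq_zero {P Q : PowerSeries ℤ} {N : ℕ}
    (h : ∀ k ≤ N, PowerSeries.coeff k P = 0) : PowerSeries.coeff N (P * Q) = 0 := by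
  have hd : (X:PowerSeries ℤ)^(N+1) ∣ P := by
    rw [X_pow_dvd_iff]; exact fun m hm => h m (Nat.lt_succ_iff.mp hm)
  have : (X:PowerSeries ℤ)^(N+1) ∣ P * Q := Dvd.dvd.mul_right hd Q
  rw [X_pow_dvd_iff] at this
  exact this N (Nat.lt_succ_self N)

-- abbreviations
def gg (m : ℕ) : PowerSeries ℤ := 1 - X ^ (3*m)
def tt' (m : ℕ) : PowerSeries ℤ := X ^ m - X ^ (2*m)

lemma cube_id (m : ℕ) : (1 - (X:PowerSeries ℤ) ^ m)^3 = gg m - 3 * tt' m := by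
  have h3 : (X:PowerSeries ℤ) ^ (3*m) = ((X:PowerSeries ℤ)^m)^3 := by
    rw [← pow_mul, mul_comm]
  have h2 : (X:PowerSeries ℤ) ^ (2*m) = ((X:PowerSeries ℤ)^m)^2 := by
    rw [← pow_mul, mul_comm]
  rw [gg, tt', h3, h2]
  ring

lemma prod_sub_prod_dvd (s : Finset ℕ) (h g : ℕ → PowerSeries ℤ) (d : PowerSeries ℤ)
    (hd : ∀ m ∈ s, d ∣ (h m - g m)) : d ∣ (∏ m ∈ s, h m) - ∏ m ∈ s, g m := by
  classical
  induction s using Finset.induction_on with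
  | empty => simp
  | @insert a s' ha ih =>
    rw [Finset.prod_insert ha, Finset.prod_insert ha]
    have h1 := ih (fun m hm => hd m (Finset.mem_insert_of_mem hm))
    have h2 := hd a (Finset.mem_insert_self a s')
    have : h a * ∏ m ∈ s', h m - g a * ∏ m ∈ s', g m
        = h a * ((∏ m ∈ s', h m) - ∏ m ∈ s', g m) + (h a - g a) * ∏ m ∈ s', g m := by ring
    rw [this]
    exact dvd_add (h1.mul_left _) (h2.mul_right _)

/-- first-order expansion of a product of (g - 3t) mod 9 -/
lemma prod_expand (s : Finset ℕ) (g t : ℕ → PowerSeries ℤ) :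
    (9:PowerSeries ℤ) ∣ (∏ m ∈ s, (g m - 3 * t m)) - (∏ m ∈ s, g m)
      + 3 * ∑ m ∈ s, t m * ∏ n ∈ s.erase m, g n := by
  classical
  induction s using Finset.induction_on with
  | empty => simp
  | @insert a s' ha ih =>
    rw [Finset.prod_insert ha, Finset.prod_insert ha, Finset.sum_insert ha,
      Finset.erase_insert ha]
    have herase : ∀ m ∈ s', (insert a s').erase m = insert a (s'.erase m) := by
      intro m hm
      exact Finset.erase_insert_of_ne (fun hma => ha (hma ▸ hm))
    have hsum : ∑ m ∈ s', t m * ∏ n ∈ (insert a s').erase m, g n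
        = g a * ∑ m ∈ s', t m * ∏ n ∈ s'.erase m, g n := by
      rw [Finset.mul_sum]
      apply Finset.sum_congr rfl
      intro m hm
      rw [herase m hm, Finset.prod_insert (fun h => ha (Finset.mem_of_mem_erase h))]
      ring
    rw [hsum]
    -- goal: 9 ∣ (g a - 3 t a) P - g a G + 3 (t a G + g a S)
    -- = g a (P - G + 3 S) - 3 t a (P - G)
    have key : (g a - 3 * t a) * (∏ m ∈ s', (g m - 3 * t m)) - g a * (∏ m ∈ s', g m)
        + 3 * (t a * (∏ m ∈ s', g m) + g a * ∑ m ∈ s', t m * ∏ n ∈ s'.erase m, g n)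
        = g a * ((∏ m ∈ s', (g m - 3 * t m)) - (∏ m ∈ s', g m)
            + 3 * ∑ m ∈ s', t m * ∏ n ∈ s'.erase m, g n)
          - 3 * (t a * ((∏ m ∈ s', (g m - 3 * t m)) - (∏ m ∈ s', g m))) := by ring
    rw [key]
    apply dvd_sub
    · exact ih.mul_left _
    · have h3 : (3:PowerSeries ℤ) ∣ (∏ m ∈ s', (g m - 3 * t m)) - (∏ m ∈ s', g m) := by
        apply prod_sub_prod_dvd
        intro m hm
        exact ⟨-(t m), by ring⟩
      obtain ⟨w, hw⟩ := h3
      exact ⟨t a * w, by rw [hw]; ring⟩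

lemma Dq_prod (s : Finset ℕ) (h : ℕ → PowerSeries ℤ) :
    Dq (∏ m ∈ s, h m) = ∑ m ∈ s, Dq (h m) * ∏ n ∈ s.erase m, h n := by
  classical
  induction s using Finset.induction_on with
  | empty => simpa using Dq_one
  | @insert a s' ha ih =>
    rw [Finset.prod_insert ha, Dq_mul, ih, Finset.sum_insert ha, Finset.erase_insert ha]
    have herase : ∀ m ∈ s', (insert a s').erase m = insert a (s'.erase m) := by
      intro m hm
      exact Finset.erase_insert_of_ne (fun hma => ha (hma ▸ hm))
    have hsum : ∑ m ∈ s', Dq (h m) * ∏ n ∈ (insert a s').erase m, h n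
        = h a * ∑ m ∈ s', Dq (h m) * ∏ n ∈ s'.erase m, h n := by
      rw [Finset.mul_sum]
      apply Finset.sum_congr rfl
      intro m hm
      rw [herase m hm, Finset.prod_insert (fun hh => ha (Finset.mem_of_mem_erase hh))]
      ring
    rw [hsum]
    ring

lemma Dq_one_sub_X_pow (m : ℕ) : Dq (1 - X ^ m) = -((m:ℤ) • (X:PowerSeries ℤ) ^ m) := by
  ext n
  simp only [coeff_Dq, map_sub, map_neg, PowerSeries.coeff_one, PowerSeries.coeff_X_pow,
    PowerSeries.coeff_smul, map_zsmul, smul_eq_mul]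
  by_cases hn : n = m
  · subst hn; by_cases h0 : n = 0 <;> simp [h0]
  · by_cases h0 : n = 0 <;> simp [h0, hn] <;> omega

abbrev A3 := PowerSeries (ZMod 3)

def γ (m : ℕ) : A3 := PowerSeries.mk fun j => if m ∣ j ∧ 0 < j then 1 else 0
def ψ (m : ℕ) : A3 := PowerSeries.mk fun j =>
  if m ∣ j ∧ 0 < j then ((j/m : ℕ) : ZMod 3) - (m : ZMod 3) else 0

lemma coeff_mul_one_sub_X_pow (P : A3) (m j : ℕ) :
    PowerSeries.coeff j (P * (1 - X ^ m))
      = PowerSeries.coeff j P - (if m ≤ j then PowerSeries.coeff (j - m) P else 0) := by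
  rw [mul_sub, mul_one, map_sub, PowerSeries.coeff_mul_X_pow']

lemma G1 (m : ℕ) (hm : 1 ≤ m) : γ m * (1 - X ^ m) = (X:A3) ^ m := by
  ext j
  rw [coeff_mul_one_sub_X_pow, PowerSeries.coeff_X_pow]
  simp only [γ, PowerSeries.coeff_mk]
  by_cases hle : m ≤ j
  · simp only [hle, if_true]
    by_cases hdvd : m ∣ j
    · have hd2 : m ∣ j - m := Nat.dvd_sub hdvd dvd_rfl
      by_cases hjm : j = m
      · subst hjm
        simp [hdvd, hm, Nat.sub_self]
        omega
      · have hj0 : 0 < j := lt_of_lt_of_le hm hle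
        have hjm0 : 0 < j - m := by
          rcases hdvd with ⟨c, rfl⟩
          rcases Nat.lt_or_ge c 2 with hc | hc
          · interval_cases c <;> simp_all <;> omega
          · have : 2*m ≤ m*c := by nlinarith
            omega
        simp [hdvd, hj0, hd2, hjm0, hjm]
    · have hd2 : ¬ m ∣ j - m := fun h => hdvd (by
        have := Nat.dvd_add h (dvd_refl m)
        rwa [Nat.sub_add_cancel hle] at this)
      have hjm : j ≠ m := fun h => hdvd (h ▸ dvd_rfl)
      simp [hdvd, hd2, hjm]
  · simp only [hle, if_false]
    have hjm : j ≠ m := fun h => hle (h ▸ le_refl m)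
    by_cases hdvd : m ∣ j
    · have : j = 0 := by
        rcases hdvd with ⟨c, rfl⟩
        rcases Nat.eq_zero_or_pos c with rfl | hc
        · simp
        · exfalso; apply hle; calc m = m*1 := by ring
            _ ≤ m*c := Nat.mul_le_mul_left m hc
      simp [this]
      omega
    · simp [hdvd, hjm]

lemma G2 (m : ℕ) (hm : 1 ≤ m) :
    ψ m * (1 - X ^ m) = γ m - (m : ZMod 3) • (X:A3) ^ m := by
  ext j
  rw [coeff_mul_one_sub_X_pow]
  simp only [ψ, γ, PowerSeries.coeff_mk, map_sub, PowerSeries.coeff_smul,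
    PowerSeries.coeff_X_pow, smul_eq_mul]
  by_cases hdvd : m ∣ j
  · rcases hdvd with ⟨c, rfl⟩
    rcases Nat.eq_zero_or_pos c with rfl | hc
    · -- j = 0
      simp [Nat.pos_iff_ne_zero.mp hm]
      intro h
      exact absurd h.symm (by omega)
    · rcases c with _ | c'
      · omega
      rcases Nat.eq_zero_or_pos c' with rfl | hc'
      · -- c = 1, j = m
        have h1 : m * 1 = m := by ring
        rw [h1, Nat.sub_self]
        have hψ : (m ∣ m ∧ 0 < m) := ⟨dvd_rfl, hm⟩
        rw [if_pos hψ, if_pos (le_refl m), if_neg (by simp : ¬ (m ∣ 0 ∧ 0 < 0)),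
          if_pos hψ, if_pos rfl, Nat.div_self hm]
        ring
      · -- c = c' + 1, c' ≥ 1
        have hlt : m < m * (c' + 1) := by nlinarith
        have hle : m ≤ m * (c' + 1) := le_of_lt hlt
        have hsub : m * (c' + 1) - m = m * c' := by
          have : m * (c' + 1) = m * c' + m := by ring
          omega
        have hc1 : m ∣ m * (c' + 1) ∧ 0 < m * (c' + 1) := ⟨Dvd.intro _ rfl, by positivity⟩
        have hc2 : m ∣ m * c' ∧ 0 < m * c' := ⟨Dvd.intro _ rfl, by positivity⟩
        rw [if_pos hc1, if_pos hle, hsub, if_pos hc2, if_pos hc1,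
          if_neg (by omega : ¬ m * (c' + 1) = m),
          Nat.mul_div_cancel_left _ (by omega : 0 < m),
          Nat.mul_div_cancel_left _ (by omega : 0 < m)]
        push_cast
        ring
  · have hd2 : ∀ h : m ≤ j, ¬ m ∣ j - m := by
      intro h hdd
      exact hdvd (by
        have := Nat.dvd_add hdd (dvd_refl m)
        rwa [Nat.sub_add_cancel h] at this)
    have hjm : j ≠ m := fun h => hdvd (h ▸ dvd_rfl)
    by_cases hle : m ≤ j
    · simp [hdvd, hd2 hle, hjm]
    · simp [hdvd, hjm, hle]

lemma G3 (m : ℕ) (hm : 1 ≤ m) :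
    ψ m * (1 - X ^ m)^3
      = X^m * (1 - X^m) - PowerSeries.C (R := ZMod 3) (m : ZMod 3) * (X^m * (1 - (X:A3)^m)^2) := by
  have h2 : ψ m * (1 - X ^ m)^3 = (ψ m * (1 - X^m)) * (1 - X^m)^2 := by ring
  rw [h2, G2 m hm, PowerSeries.smul_eq_C_mul]
  have h3 : (γ m - PowerSeries.C (R := ZMod 3) (m:ZMod 3) * X ^ m) * (1 - X^m)^2
      = (γ m * (1 - X^m)) * (1 - X^m) - PowerSeries.C (R := ZMod 3) (m:ZMod 3) * (X^m * (1-X^m)^2) := by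
    ring
  rw [h3, G1 m hm]

lemma psi_sum_coeff (N k : ℕ) (hk : k ≤ N) :
    PowerSeries.coeff k (∑ m ∈ Finset.Icc 1 N, ψ m) = 0 := by
  rw [map_sum]
  rcases Nat.eq_zero_or_pos k with rfl | hk0
  · apply Finset.sum_eq_zero
    intro m _
    simp [ψ]
  · have hsub : k.divisors ⊆ Finset.Icc 1 N := by
      intro d hd
      rw [Nat.mem_divisors] at hd
      have h1 : 0 < d := Nat.pos_of_dvd_of_pos hd.1 hk0
      have h2 : d ≤ k := Nat.le_of_dvd hk0 hd.1
      exact Finset.mem_Icc.mpr ⟨h1, le_trans h2 hk⟩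
    have hzero : ∀ m ∈ Finset.Icc 1 N, m ∉ k.divisors →
        PowerSeries.coeff k (ψ m) = 0 := by
      intro m _ hm
      simp only [ψ, PowerSeries.coeff_mk, ite_eq_right_iff]
      intro ⟨hdvd, _⟩
      exact absurd (Nat.mem_divisors.mpr ⟨hdvd, by omega⟩) hm
    rw [← Finset.sum_subset hsub hzero]
    have hval : ∀ m ∈ k.divisors, PowerSeries.coeff k (ψ m)
        = ((k/m : ℕ) : ZMod 3) - (m : ZMod 3) := by
      intro m hm
      rw [Nat.mem_divisors] at hm
      simp [ψ, hm.1, hk0]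
    rw [Finset.sum_congr rfl hval, Finset.sum_sub_distrib,
      Nat.sum_div_divisors k (fun d => (d : ZMod 3))]
    simp

lemma cube3 (n : ℕ) : ((1:A3) - X^n)^3 = 1 - X^(3*n) := by
  have hx : (X:A3)^(3*n) = ((X:A3)^n)^3 := by rw [← pow_mul, mul_comm]
  have h3 : (3:A3) = 0 := by
    rw [← map_ofNat (PowerSeries.C (R := ZMod 3)) 3, show (3:ZMod 3) = 0 by decide, map_zero]
  have hy : ∀ y : A3, (1 - y)^3 = 1 - 3*y + 3*y^2 - y^3 := by intro y; ring
  rw [hx, hy, h3]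
  ring

def ρ3 : PowerSeries ℤ →+* A3 := PowerSeries.map (Int.castRingHom (ZMod 3))

lemma coeff_ρ3 (P : PowerSeries ℤ) (n : ℕ) :
    PowerSeries.coeff n (ρ3 P) = ((PowerSeries.coeff n P : ℤ) : ZMod 3) := by
  simp [ρ3, PowerSeries.coeff_map]

def cInt (m : ℕ) : PowerSeries ℤ :=
  (X^m - X^(2*m)) - PowerSeries.C (R := ℤ) (m:ℤ) * (X^m * (1 - X^m)^2)

lemma rho_cInt (m : ℕ) (hm : 1 ≤ m) : ρ3 (cInt m) = ψ m * (1 - X^m)^3 := by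
  rw [G3 m hm, cInt]
  have h2m : (X:A3)^(2*m) = X^m * X^m := by rw [two_mul, pow_add]
  have h2mZ : (X:PowerSeries ℤ)^(2*m) = X^m * X^m := by rw [two_mul, pow_add]
  simp only [map_sub, map_mul, map_pow, ρ3, PowerSeries.map_X, PowerSeries.map_C, map_one,
    map_sub, map_mul]
  rw [h2m]
  have : ((Int.castRingHom (ZMod 3)) (m:ℤ)) = (m : ZMod 3) := by push_cast; rfl
  rw [this]
  ring

lemma coeff_mul_eq_zero3 {P Q : A3} {N : ℕ}
    (h : ∀ k ≤ N, PowerSeries.coeff k P = 0) :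
    PowerSeries.coeff N (P * Q) = 0 := by
  have hd : (X:A3)^(N+1) ∣ P := by
    rw [X_pow_dvd_iff]; exact fun m hm => h m (Nat.lt_succ_iff.mp hm)
  have : (X:A3)^(N+1) ∣ P * Q := hd.mul_right Q
  rw [X_pow_dvd_iff] at this
  exact this N (Nat.lt_succ_self N)

lemma cancel (N : ℕ) :
    (3:ℤ) ∣ PowerSeries.coeff N (∑ m ∈ Finset.Icc 1 N,
      cInt m * ∏ n ∈ (Finset.Icc 1 N).erase m, (1 - (X:PowerSeries ℤ)^(3*n))) := by
  have hiff := ZMod.intCast_zmod_eq_zero_iff_dvd (PowerSeries.coeff N (∑ m ∈ Finset.Icc 1 N,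
      cInt m * ∏ n ∈ (Finset.Icc 1 N).erase m, (1 - (X:PowerSeries ℤ)^(3*n)))) 3
  rw [show (((3:ℕ)):ℤ) = (3:ℤ) by norm_num] at hiff
  rw [← hiff, ← coeff_ρ3]
  have hρ : ρ3 (∑ m ∈ Finset.Icc 1 N,
      cInt m * ∏ n ∈ (Finset.Icc 1 N).erase m, (1 - (X:PowerSeries ℤ)^(3*n)))
      = (∑ m ∈ Finset.Icc 1 N, ψ m) * ∏ n ∈ Finset.Icc 1 N, ((1:A3) - X^n)^3 := by
    rw [map_sum, Finset.sum_mul]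
    apply Finset.sum_congr rfl
    intro m hm
    have hm1 : 1 ≤ m := (Finset.mem_Icc.mp hm).1
    rw [map_mul, rho_cInt m hm1]
    have hprod : ρ3 (∏ n ∈ (Finset.Icc 1 N).erase m, (1 - (X:PowerSeries ℤ)^(3*n)))
        = ∏ n ∈ (Finset.Icc 1 N).erase m, ((1:A3) - X^n)^3 := by
      rw [map_prod]
      apply Finset.prod_congr rfl
      intro n _
      rw [map_sub, map_one, map_pow, show ρ3 X = (X:A3) from PowerSeries.map_X _, cube3]
    rw [hprod, mul_assoc, Finset.mul_prod_erase _ (fun n => ((1:A3) - X^n)^3) hm]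
  rw [hρ]
  exact coeff_mul_eq_zero3 (fun k hk => psi_sum_coeff N k hk)

-- now the CORE lemma
def dd (m : ℕ) : PowerSeries ℤ := PowerSeries.C (R := ℤ) (m:ℤ) * (X^m * (1 - X^m)^2)

lemma Dq_cube (m : ℕ) : Dq ((1 - (X:PowerSeries ℤ)^m)^3) = -(3 * dd m) := by
  rw [Dq_pow, Dq_one_sub_X_pow, dd]
  have h1 : ((3:ℕ):ℤ) • ((1 - (X:PowerSeries ℤ)^m) ^ (3-1) * -((m:ℤ) • X ^ m))
      = (3:PowerSeries ℤ) * ((1 - X^m)^2 * -((m:ℤ) • X^m)) := by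
    rw [zsmul_eq_mul]
    norm_num
  rw [h1, zsmul_eq_mul]
  have h2 : ((m:ℤ) : PowerSeries ℤ) = PowerSeries.C (R := ℤ) (m:ℤ) := by
    rw [← map_intCast (PowerSeries.C (R := ℤ)) (m:ℤ), Int.cast_id]
  rw [h2]
  ring

lemma core_coeff (N : ℕ) :
    (9:ℤ) ∣ PowerSeries.coeff N (etaF 3 - (etaF 1)^3 + Dq ((etaF 1)^3)) := by
  set s := Finset.Icc 1 N with hs
  set F := trP 1 N with hF
  set G := trP 3 N with hG
  -- coefficient transfers
  have hF3 : (X:PowerSeries ℤ)^(N+1) ∣ (etaF 1)^3 - F^3 := by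
    have h := etaF_sub_trP 1 le_rfl N
    have : (etaF 1)^3 - F^3
        = (etaF 1 - F) * ((etaF 1)^2 + etaF 1 * F + F^2) := by ring
    rw [this]
    exact h.mul_right _
  have hc1 : PowerSeries.coeff N (etaF 3) = PowerSeries.coeff N G :=
    coeff_eq_of_X_dvd (etaF_sub_trP 3 (by norm_num) N) le_rfl
  have hc2 : PowerSeries.coeff N ((etaF 1)^3) = PowerSeries.coeff N (F^3) :=
    coeff_eq_of_X_dvd hF3 le_rfl
  have hc3 : PowerSeries.coeff N (Dq ((etaF 1)^3)) = PowerSeries.coeff N (Dq (F^3)) := by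
    rw [coeff_Dq, coeff_Dq, hc2]
  have hcoeff : PowerSeries.coeff N (etaF 3 - (etaF 1)^3 + Dq ((etaF 1)^3))
      = PowerSeries.coeff N (G - F^3 + Dq (F^3)) := by
    simp only [map_add, map_sub, hc1, hc2, hc3]
  rw [hcoeff]
  -- F as product over s
  have hFprod : F = ∏ m ∈ s, (1 - (X:PowerSeries ℤ)^m) := by
    rw [hF, trP_def]
    apply Finset.prod_congr rfl
    intro m _
    rw [one_mul]
  have hGprod : G = ∏ m ∈ s, gg m := by
    rw [hG, trP_def]
    apply Finset.prod_congr rfl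
    intro m _
    rfl
  have hF3prod : F^3 = ∏ m ∈ s, (gg m - 3 * tt' m) := by
    rw [hFprod, ← Finset.prod_pow]
    exact Finset.prod_congr rfl (fun m _ => cube_id m)
  -- expansion of F^3
  have h1 : (9:PowerSeries ℤ) ∣ F^3 - G + 3 * ∑ m ∈ s, tt' m * ∏ n ∈ s.erase m, gg n := by
    rw [hF3prod, hGprod]
    exact prod_expand s gg tt'
  -- expansion of Dq F^3
  have h2 : (9:PowerSeries ℤ) ∣ Dq (F^3) + 3 * ∑ m ∈ s, dd m * ∏ n ∈ s.erase m, gg n := by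
    have hDq : Dq (F^3) = ∑ m ∈ s, Dq ((1 - (X:PowerSeries ℤ)^m)^3)
        * ∏ n ∈ s.erase m, (1 - (X:PowerSeries ℤ)^n)^3 := by
      rw [hFprod, ← Finset.prod_pow, Dq_prod]
    rw [hDq]
    have : ∑ m ∈ s, Dq ((1 - (X:PowerSeries ℤ)^m)^3) * ∏ n ∈ s.erase m, (1 - (X:PowerSeries ℤ)^n)^3
        + 3 * ∑ m ∈ s, dd m * ∏ n ∈ s.erase m, gg n
        = ∑ m ∈ s, (-(3 * dd m) * ((∏ n ∈ s.erase m, (1 - (X:PowerSeries ℤ)^n)^3)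
            - ∏ n ∈ s.erase m, gg n)) := by
      rw [Finset.mul_sum, ← Finset.sum_add_distrib]
      apply Finset.sum_congr rfl
      intro m _
      rw [Dq_cube]
      ring
    rw [this]
    apply Finset.dvd_sum
    intro m _
    have h3 : (3:PowerSeries ℤ) ∣ (∏ n ∈ s.erase m, (1 - (X:PowerSeries ℤ)^n)^3)
        - ∏ n ∈ s.erase m, gg n := by
      apply prod_sub_prod_dvd
      intro n _
      exact ⟨-(tt' n), by rw [cube_id]; ring⟩
    obtain ⟨w, hw⟩ := h3
    exact ⟨-(dd m) * w, by rw [hw]; ring⟩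
  -- cancellation
  have h3 : (3:ℤ) ∣ PowerSeries.coeff N (∑ m ∈ s, (tt' m - dd m) * ∏ n ∈ s.erase m, gg n) := by
    have : ∀ m, tt' m - dd m = cInt m := by
      intro m
      rw [tt', dd, cInt]
    have heq : (∑ m ∈ s, (tt' m - dd m) * ∏ n ∈ s.erase m, gg n)
        = ∑ m ∈ s, cInt m * ∏ n ∈ s.erase m, (1 - (X:PowerSeries ℤ)^(3*n)) := by
      apply Finset.sum_congr rfl
      intro m _
      rw [this m]
      simp [gg]
    rw [heq]
    exact cancel N
  -- assemble
  have hsplit : ∑ m ∈ s, (tt' m - dd m) * ∏ n ∈ s.erase m, gg n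
      = (∑ m ∈ s, tt' m * ∏ n ∈ s.erase m, gg n) - ∑ m ∈ s, dd m * ∏ n ∈ s.erase m, gg n := by
    rw [← Finset.sum_sub_distrib]
    apply Finset.sum_congr rfl
    intro m _
    ring
  have hkey : G - F^3 + Dq (F^3)
      = -(F^3 - G + 3 * ∑ m ∈ s, tt' m * ∏ n ∈ s.erase m, gg n)
        + (Dq (F^3) + 3 * ∑ m ∈ s, dd m * ∏ n ∈ s.erase m, gg n)
        + 3 * ∑ m ∈ s, (tt' m - dd m) * ∏ n ∈ s.erase m, gg n := by
    rw [hsplit]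
    ring
  rw [hkey]
  obtain ⟨w1, hw1⟩ := h1
  obtain ⟨w2, hw2⟩ := h2
  rw [map_add, map_add, map_neg, hw1, hw2]
  have h9 : ∀ (w : PowerSeries ℤ), PowerSeries.coeff N (9 * w) = 9 * PowerSeries.coeff N w := by
    intro w
    have : (9:PowerSeries ℤ) = PowerSeries.C (R := ℤ) 9 := by
      rw [← map_ofNat (PowerSeries.C (R := ℤ)) 9]
    rw [this, PowerSeries.coeff_C_mul]
  have h3' : PowerSeries.coeff N (3 * ∑ m ∈ s, (tt' m - dd m) * ∏ n ∈ s.erase m, gg n)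
      = 3 * PowerSeries.coeff N (∑ m ∈ s, (tt' m - dd m) * ∏ n ∈ s.erase m, gg n) := by
    have : (3:PowerSeries ℤ) = PowerSeries.C (R := ℤ) 3 := by
      rw [← map_ofNat (PowerSeries.C (R := ℤ)) 3]
    rw [this, PowerSeries.coeff_C_mul]
  rw [h9, h9, h3']
  obtain ⟨v, hv⟩ := h3
  rw [hv]
  exact ⟨-PowerSeries.coeff N w1 + PowerSeries.coeff N w2 + v, by ring⟩

lemma core : (PowerSeries.C (R := ℤ) 9) ∣ (etaF 3 - (etaF 1)^3 + Dq ((etaF 1)^3)) := by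
  rw [int_dvd_iff]
  exact core_coeff

lemma C_int (a : ℤ) : ((a : PowerSeries ℤ)) = PowerSeries.C (R := ℤ) a := by
  rw [← map_intCast (PowerSeries.C (R := ℤ)) a, Int.cast_id]

lemma hC3 : PowerSeries.C (R := ℤ) 3 = (3 : PowerSeries ℤ) := map_ofNat _ 3

lemma hC9 : PowerSeries.C (R := ℤ) 9 = (9 : PowerSeries ℤ) := map_ofNat _ 9

theorem stmt13 (S : Finset ℕ) (hpos : ∀ i ∈ S, 0 < i) (e : ℕ → ℤ)
    (h1 : 1 ∈ S) (h1exp : ∃ k : ℤ, e 1 = 3 * k + 1)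
    (hmul3 : ∀ i ∈ S, i ≠ 1 → ¬ (3 ∣ i) → (3 : ℤ) ∣ e i)
    (A B : PowerSeries ℤ)
    (hA : A = ↑(∏ i ∈ S, (etaU i) ^ (e i)))
    (hB : B = ↑(etaU 3 * ((etaU 1) ^ 3)⁻¹) * A) :
    ∀ n : ℕ, ((9 : ℤ) ∣ PowerSeries.coeff n A ↔ (9 : ℤ) ∣ PowerSeries.coeff n B) := by
  classical
  set L := ∑ i ∈ S, e i • ld (etaU i) with hL
  -- 1. f1^3 * B = f3 * A
  have hf1cube : (etaF 1)^3 = ((etaU 1 ^ 3 : (PowerSeries ℤ)ˣ) : PowerSeries ℤ) := by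
    rw [Units.val_pow_eq_pow_val, etaU_val]
  have hf13 : (etaF 1)^3 * B = etaF 3 * A := by
    rw [hB, Units.val_mul, hf1cube]
    calc ((etaU 1 ^ 3 : (PowerSeries ℤ)ˣ) : PowerSeries ℤ)
          * (((etaU 3 : (PowerSeries ℤ)ˣ) : PowerSeries ℤ)
            * (((etaU 1 ^ 3)⁻¹ : (PowerSeries ℤ)ˣ) : PowerSeries ℤ) * A)
        = ((etaU 3 : (PowerSeries ℤ)ˣ) : PowerSeries ℤ)
            * (((etaU 1 ^ 3 : (PowerSeries ℤ)ˣ) : PowerSeries ℤ)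
              * (((etaU 1 ^ 3)⁻¹ : (PowerSeries ℤ)ˣ) : PowerSeries ℤ)) * A := by ring
      _ = etaF 3 * A := by rw [Units.mul_inv, mul_one, etaU_val]
  -- 2. Dq A = A * L
  have hDqA : Dq A = A * L := by
    rw [hA, Dq_unit, hL]
    congr 1
    rw [ld_prod]
    apply Finset.sum_congr rfl
    intro i _
    rw [ld_zpow]
  -- 3. C3 ∣ L - ld (etaU 1)
  have hLsub : (PowerSeries.C (R := ℤ) 3) ∣ L - ld (etaU 1) := by
    rw [hL, ← Finset.add_sum_erase S _ h1]
    obtain ⟨k, hk⟩ := h1exp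
    have h1' : e 1 • ld (etaU 1) - ld (etaU 1) = PowerSeries.C (R := ℤ) 3 * (k • ld (etaU 1)) := by
      rw [hk, zsmul_eq_mul, zsmul_eq_mul, hC3]
      push_cast
      ring
    have : e 1 • ld (etaU 1) + (∑ i ∈ S.erase 1, e i • ld (etaU i)) - ld (etaU 1)
        = (e 1 • ld (etaU 1) - ld (etaU 1)) + ∑ i ∈ S.erase 1, e i • ld (etaU i) := by ring
    rw [this, h1']
    apply dvd_add
    · exact Dvd.intro _ rfl
    apply Finset.dvd_sum
    intro i hi
    have hiS : i ∈ S := Finset.mem_of_mem_erase hi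
    have hi1 : i ≠ 1 := Finset.ne_of_mem_erase hi
    have hipos : 1 ≤ i := hpos i hiS
    by_cases h3i : 3 ∣ i
    · have hdvd : (PowerSeries.C (R := ℤ) 3) ∣ ld (etaU i) := by
        rw [ld_def, etaU_val]
        exact (three_dvd_Dq_etaF i hipos h3i).mul_right _
      rw [zsmul_eq_mul]
      exact hdvd.mul_left _
    · obtain ⟨c, hc⟩ := hmul3 i hiS hi1 h3i
      rw [zsmul_eq_mul, hc, hC3]
      refine ⟨(c : PowerSeries ℤ) * ld (etaU i), ?_⟩
      push_cast
      ring
  -- 3 f1^3 ld u1 = Dq (f1^3)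
  have hld1 : 3 * ((etaF 1)^3 * ld (etaU 1)) = Dq ((etaF 1)^3) := by
    rw [Dq_pow]
    have : ((3:ℕ):ℤ) • ((etaF 1) ^ (3-1) * Dq (etaF 1)) = 3 * ((etaF 1)^2 * Dq (etaF 1)) := by
      rw [zsmul_eq_mul]; norm_num
    rw [this, ld_def, etaU_val]
    have h2 : (etaF 1)^3 * (Dq (etaF 1) * ((etaU 1)⁻¹ : (PowerSeries ℤ)ˣ))
        = (etaF 1)^2 * Dq (etaF 1) * ((etaF 1) * ((etaU 1)⁻¹ : (PowerSeries ℤ)ˣ)) := by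
      ring
    rw [h2, ← etaU_val 1, Units.mul_inv, mul_one]
  -- 4. MAIN
  have hmain : (PowerSeries.C (R := ℤ) 9) ∣ B - A + 3 * Dq A := by
    have hmain1 : (PowerSeries.C (R := ℤ) 9) ∣ (etaF 1)^3 * (B - A + 3 * Dq A) := by
      obtain ⟨w, hw⟩ := hLsub
      have hexp : (etaF 1)^3 * (B - A + 3 * Dq A)
          = (etaF 3 - (etaF 1)^3 + Dq ((etaF 1)^3)) * A
            + 3 * PowerSeries.C (R := ℤ) 3 * w * ((etaF 1)^3 * A) := by
        have hLw : L = ld (etaU 1) + PowerSeries.C (R := ℤ) 3 * w := by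
          rw [← hw]; ring
        calc (etaF 1)^3 * (B - A + 3 * Dq A)
            = (etaF 1)^3 * B - (etaF 1)^3 * A + 3 * ((etaF 1)^3 * (A * L)) := by
              rw [hDqA]; ring
          _ = etaF 3 * A - (etaF 1)^3 * A
              + 3 * ((etaF 1)^3 * ld (etaU 1)) * A + 3 * PowerSeries.C (R := ℤ) 3 * w * ((etaF 1)^3 * A) := by
              rw [hf13, hLw]; ring
          _ = _ := by rw [hld1]; ring
      rw [hexp]
      apply dvd_add
      · exact core.mul_right _
      · have h9 : (3:PowerSeries ℤ) * PowerSeries.C (R := ℤ) 3 = PowerSeries.C (R := ℤ) 9 := by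
          have h33 : (PowerSeries.C (R := ℤ)) 3 * (PowerSeries.C (R := ℤ)) 3 = (PowerSeries.C (R := ℤ)) 9 := by
            rw [← map_mul]; norm_num
          rw [← h33, show PowerSeries.C (R := ℤ) 3 = (3:PowerSeries ℤ) from map_ofNat _ 3]
        exact ⟨w * ((etaF 1)^3 * A), by rw [← h9]; ring⟩
    obtain ⟨w, hw⟩ := hmain1
    refine ⟨(((etaU 1 ^ 3)⁻¹ : (PowerSeries ℤ)ˣ) : PowerSeries ℤ) * w, ?_⟩
    have : B - A + 3 * Dq A
        = (((etaU 1 ^ 3)⁻¹ : (PowerSeries ℤ)ˣ) : PowerSeries ℤ) * ((etaF 1)^3 * (B - A + 3 * Dq A)) := by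
      rw [hf1cube, ← mul_assoc, Units.inv_mul, one_mul]
    rw [this, hw]
    ring
  -- 5. coefficients
  intro n
  rw [int_dvd_iff] at hmain
  obtain ⟨u, hu⟩ := hmain n
  rw [map_add, map_sub] at hu
  have h3Dq : PowerSeries.coeff n (3 * Dq A) = 3 * ((n:ℤ) * PowerSeries.coeff n A) := by
    rw [← hC3, PowerSeries.coeff_C_mul, coeff_Dq]
  rw [h3Dq] at hu
  set a := PowerSeries.coeff n A
  set b := PowerSeries.coeff n B
  -- hu : b - a + 3 * (n * a) = 9 * u
  constructor
  · intro ⟨v, hv⟩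
    exact ⟨u + v - 3 * (n:ℤ) * v, by linear_combination hu + (1-3*(n:ℤ))*hv⟩
  · intro ⟨v, hv⟩
    exact ⟨(1 + 3*(n:ℤ))*v - (1 + 3*(n:ℤ))*u + (n:ℤ)^2 * a,
      by linear_combination (-(1+3*(n:ℤ)))*hu + (1+3*(n:ℤ))*hv⟩

end
end
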